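/- arXiv:1808.09097 — 7 statements merged into one kernel-verified Lean document; each statement's English description precedes it below -/
import Mathlib

section
/- Let G be a connected graph and P_r a path on r vertices, and let S be an isometric path cover of P_r □ G. If there exists some layer index j₀ ∈ {1,...,r} such that no path in S contains any edge of the copy G^{j₀} of G at level j₀, then |S| ≥ |V(G)|. -/
open SimpleGraph

/-- `s` is the vertex set of an isometric (shortest) path in `G`. -/
def IsIsoPathSet {V : Type*} (G : SimpleGraph V) (s : Set V) : Prop :=
  ∃ (u v : V) (p : G.Walk u v), p.IsPath ∧ p.length = G.dist u v ∧ s = {x | x ∈ p.support}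

/-- The isometric path cover number. -/
noncomputable def ipCover {V : Type*} (G : SimpleGraph V) : ℕ :=
  sInf {n | ∃ f : Fin n → Set V, (∀ i, IsIsoPathSet G (f i)) ∧ (⋃ i, f i) = Set.univ}

/-- The isometric path partition number. -/
noncomputable def ipPartition {V : Type*} (G : SimpleGraph V) : ℕ :=
  sInf {n | ∃ f : Fin n → Set V, (∀ i, IsIsoPathSet G (f i)) ∧ (⋃ i, f i) = Set.univ ∧
    Pairwise (Function.onFun Disjoint f)}


/-- Combined counting lemma: dist of second projection plus number of first-coordinate-changing
darts is at most the walk length. -/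
lemma aux_count {α β : Type*} [DecidableEq α] {A : SimpleGraph α} {B : SimpleGraph β}
    (hB : B.Connected) {x y : α × β} (q : (A □ B).Walk x y) :
    B.dist x.2 y.2 + (q.darts.countP (fun d => !decide (d.toProd.1.1 = d.toProd.2.1))) ≤
      q.length := by
  induction q with
  | nil => simp
  | cons h q ih =>
    rename_i u v w
    have hadj := h
    rw [SimpleGraph.boxProd_adj] at hadj
    rw [SimpleGraph.Walk.darts_cons, SimpleGraph.Walk.length_cons]
    rcases hadj with ⟨hA, he⟩ | ⟨hB', he⟩
    · rw [List.countP_cons_of_pos (by simp [hA.ne])]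
      have h2 : B.dist u.2 w.2 = B.dist v.2 w.2 := by rw [he]
      omega
    · rw [List.countP_cons_of_neg (by simp [he])]
      have htri : B.dist u.2 w.2 ≤ B.dist u.2 v.2 + B.dist v.2 w.2 := hB.dist_triangle
      have h2 : B.dist u.2 v.2 ≤ 1 := by
        rw [← SimpleGraph.dist_eq_one_iff_adj] at hB'
        omega
      omega

/-- Core lemma: a short walk between two distinct layer-`j₀` vertices must contain a
`G^{j₀}`-dart. -/
lemma aux_core {V : Type*} {G : SimpleGraph V} (hG : G.Connected) {r : ℕ} {j₀ : Fin r}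
    {v w : V} (hne : v ≠ w) (q : (pathGraph r □ G).Walk (j₀, v) (j₀, w))
    (hlen : q.length ≤ G.dist v w) :
    ∃ d ∈ q.darts, d.toProd.1.1 = j₀ ∧ d.toProd.2.1 = j₀ := by
  have hc : G.dist v w +
      (q.darts.countP (fun d => !decide (d.toProd.1.1 = d.toProd.2.1))) ≤ q.length :=
    aux_count hG q
  have hz : q.darts.countP (fun d => !decide (d.toProd.1.1 = d.toProd.2.1)) = 0 := by omega
  rw [List.countP_eq_zero] at hz
  cases q with
  | nil => exact absurd rfl hne
  | cons h q' =>
    rename_i z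
    have hmem : SimpleGraph.Dart.mk ((j₀, v), z) h ∈ (SimpleGraph.Walk.cons h q').darts := by
      rw [SimpleGraph.Walk.darts_cons]; exact List.mem_cons_self
    refine ⟨SimpleGraph.Dart.mk ((j₀, v), z) h, hmem, rfl, ?_⟩
    have := hz _ hmem
    simp only [Bool.not_eq_true', decide_eq_false_iff_not, not_not] at this
    exact this.symm

/-- The initial segment of a geodesic is a geodesic. -/
lemma aux_take {V : Type*} [DecidableEq V] {G : SimpleGraph V} (hconn : G.Connected)
    {a b : V} (p : G.Walk a b) (hp : p.length = G.dist a b) {x : V} (hx : x ∈ p.support) :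
    (p.takeUntil x hx).length = G.dist a x := by
  have h1 := congrArg SimpleGraph.Walk.length (p.take_spec hx)
  rw [SimpleGraph.Walk.length_append] at h1
  have d1 : G.dist a x ≤ (p.takeUntil x hx).length := SimpleGraph.dist_le _
  have d2 : G.dist x b ≤ (p.dropUntil x hx).length := SimpleGraph.dist_le _
  have t1 : G.dist a b ≤ G.dist a x + G.dist x b := hconn.dist_triangle
  omega

/-- A middle segment of a geodesic is a geodesic. -/
lemma aux_seg {V : Type*} [DecidableEq V] {G : SimpleGraph V} (hconn : G.Connected)
    {a b : V} (p : G.Walk a b) (hp : p.length = G.dist a b) {x y : V} (hx : x ∈ p.support)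
    (hy : y ∈ (p.dropUntil x hx).support) :
    ((p.dropUntil x hx).takeUntil y hy).length = G.dist x y := by
  have h1 := congrArg SimpleGraph.Walk.length (p.take_spec hx)
  rw [SimpleGraph.Walk.length_append] at h1
  have h2 := congrArg SimpleGraph.Walk.length ((p.dropUntil x hx).take_spec hy)
  rw [SimpleGraph.Walk.length_append] at h2
  have d1 : G.dist a x ≤ (p.takeUntil x hx).length := SimpleGraph.dist_le _
  have d2 : G.dist x y ≤ ((p.dropUntil x hx).takeUntil y hy).length := SimpleGraph.dist_le _
  have d3 : G.dist y b ≤ ((p.dropUntil x hx).dropUntil y hy).length := SimpleGraph.dist_le _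
  have t0 : G.dist a b ≤ G.dist a x + G.dist x b := hconn.dist_triangle
  have t0' : G.dist x b ≤ G.dist x y + G.dist y b := hconn.dist_triangle
  omega

theorem stmt_7 {V : Type*} [Fintype V] (G : SimpleGraph V) (hG : G.Connected) (r n : ℕ)
    (f : Fin n → Σ (u : Fin r × V) (v : Fin r × V), (pathGraph r □ G).Walk u v)
    (hpath : ∀ i, ((f i).2.2).IsPath)
    (hiso : ∀ i, ((f i).2.2).length = (pathGraph r □ G).dist (f i).1 (f i).2.1)
    (hcov : ∀ x : Fin r × V, ∃ i, x ∈ ((f i).2.2).support)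
    (j₀ : Fin r)
    (hlayer : ∀ i, ∀ d ∈ ((f i).2.2).darts,
      ¬(d.toProd.1.1 = j₀ ∧ d.toProd.2.1 = j₀)) :
    Fintype.card V ≤ n := by
  classical
  have hP : (pathGraph r).Connected := by
    have hr : 0 < r := j₀.pos
    obtain ⟨r', rfl⟩ : ∃ r', r = r' + 1 := ⟨r - 1, by omega⟩
    exact pathGraph_connected r'
  have hprod : (pathGraph r □ G).Connected := hP.boxProd hG
  have hub : ∀ (v w : V), (pathGraph r □ G).dist (j₀, v) (j₀, w) ≤ G.dist v w := by
    intro v w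
    obtain ⟨q, hq⟩ := hG.exists_walk_length_eq_dist v w
    calc (pathGraph r □ G).dist (j₀, v) (j₀, w)
        ≤ (SimpleGraph.Walk.boxProdRight (pathGraph r) j₀ q).length := SimpleGraph.dist_le _
      _ = q.length := by
          simp [SimpleGraph.Walk.boxProdRight, SimpleGraph.Walk.length_map]
          exact SimpleGraph.Walk.length_map _ _
      _ = G.dist v w := hq
  choose F hF using fun v : V => hcov (j₀, v)
  suffices hinj : Function.Injective F by
    simpa using Fintype.card_le_of_injective F hinj
  intro v w hvw
  by_contra hne
  set i := F v with hi
  set p := (f i).2.2 with hpdef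
  have hx : (j₀, v) ∈ p.support := hF v
  have hy : (j₀, w) ∈ p.support := by
    have := hF w
    rwa [← hvw] at this
  have hgeo : p.length = (pathGraph r □ G).dist (f i).1 (f i).2.1 := hiso i
  have hcases : (j₀, w) ∈ (p.takeUntil (j₀, v) hx).support ∨
      (j₀, w) ∈ (p.dropUntil (j₀, v) hx).support := by
    rw [← SimpleGraph.Walk.mem_support_append_iff, p.take_spec hx]
    exact hy
  rcases hcases with hyt | hyd
  · -- (j₀, w) occurs before (j₀, v)
    have ht : (p.takeUntil (j₀, v) hx).length = (pathGraph r □ G).dist (f i).1 (j₀, v) :=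
      aux_take hprod p hgeo hx
    have hx2 : (j₀, v) ∈ ((p.takeUntil (j₀, v) hx).dropUntil (j₀, w) hyt).support :=
      SimpleGraph.Walk.end_mem_support _
    have hseg := aux_seg hprod (p.takeUntil (j₀, v) hx) ht hyt hx2
    obtain ⟨d, hd, hd1, hd2⟩ := aux_core hG (Ne.symm hne)
      (((p.takeUntil (j₀, v) hx).dropUntil (j₀, w) hyt).takeUntil (j₀, v) hx2)
      (by rw [hseg]; exact hub w v)
    exact hlayer i d (SimpleGraph.Walk.darts_takeUntil_subset p hx
      ((p.takeUntil (j₀, v) hx).darts_dropUntil_subset hyt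
        (((p.takeUntil (j₀, v) hx).dropUntil (j₀, w) hyt).darts_takeUntil_subset hx2 hd)))
      ⟨hd1, hd2⟩
  · -- (j₀, w) occurs after (j₀, v)
    have hseg := aux_seg hprod p hgeo hx hyd
    obtain ⟨d, hd, hd1, hd2⟩ := aux_core hG hne
      ((p.dropUntil (j₀, v) hx).takeUntil (j₀, w) hyd)
      (by rw [hseg]; exact hub v w)
    exact hlayer i d (p.darts_dropUntil_subset hx
      ((p.dropUntil (j₀, v) hx).darts_takeUntil_subset hyd hd)) ⟨hd1, hd2⟩
end

section
/- For the r-dimensional grid Ξ(d₁, d₂, ..., d_r) = P_{d₁} □ P_{d₂} □ ⋯ □ P_{d_r} with d₁ ≥ ((d₂−1)+(d₃−1)+⋯+(d_r−1))·(d₂d₃⋯d_r), both the isometric path cover number and the isometric path partition number equal d₂d₃⋯d_r. -/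
open SimpleGraph

/-- The multi-dimensional grid: the Cartesian (box) product of the path graphs
`pathGraph (d 0), ..., pathGraph (d (k-1))`. -/
def gridGraph {k : ℕ} (d : Fin k → ℕ) : SimpleGraph (∀ i, Fin (d i)) where
  Adj a b := ∃ i, (pathGraph (d i)).Adj (a i) (b i) ∧ ∀ j, j ≠ i → a j = b j
  symm := by
    constructor
    rintro a b ⟨i, hadj, heq⟩
    exact ⟨i, hadj.symm, fun j hj => (heq j hj).symm⟩
  loopless := by
    constructor
    rintro a ⟨i, hadj, -⟩
    exact (pathGraph (d i)).loopless.irrefl _ hadj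

/-! ### Auxiliary lemmas -/

/-- A Hamiltonian monotone walk in the path graph from `0` to `m`. -/
def pgWalk (n : ℕ) : (m : ℕ) → (h : m < n) →
    (pathGraph n).Walk ⟨0, Nat.lt_of_le_of_lt (Nat.zero_le m) h⟩ ⟨m, h⟩
  | 0, _ => SimpleGraph.Walk.nil
  | m+1, h => ((pgWalk n m (by omega)).concat (by rw [pathGraph_adj]; left; simp)).copy rfl rfl

theorem pgWalk_length (n m : ℕ) (h : m < n) : (pgWalk n m h).length = m := by
  induction m with
  | zero => rfl
  | succ m ih => simp [pgWalk, Walk.length_concat, ih]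

theorem pgWalk_support (n m : ℕ) (h : m < n) (x : Fin n) :
    x ∈ (pgWalk n m h).support ↔ (x : ℕ) ≤ m := by
  induction m with
  | zero =>
    simp only [pgWalk, Walk.support_nil, List.mem_singleton, Fin.ext_iff]
    omega
  | succ m ih =>
    simp only [pgWalk, Walk.support_copy, Walk.support_concat, List.concat_eq_append,
      List.mem_append, List.mem_singleton, ih (by omega), Fin.ext_iff]
    omega

theorem pgWalk_isPath (n m : ℕ) (h : m < n) : (pgWalk n m h).IsPath := by
  induction m with
  | zero => simp [pgWalk]
  | succ m ih =>
    rw [pgWalk, Walk.isPath_copy, Walk.isPath_def _, Walk.support_concat]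
    simp only [List.concat_eq_append, List.nodup_append, List.nodup_singleton,
      List.disjoint_singleton]
    refine ⟨(Walk.isPath_def _).mp (ih (by omega)), trivial, ?_⟩
    intro a ha b hb hab
    rw [pgWalk_support] at ha
    simp only [List.mem_singleton] at hb
    subst hb hab
    simp at ha

/-- Short walks exist in path graphs. -/
theorem pg_exists_walk (n : ℕ) (x y : Fin n) :
    ∃ q : (pathGraph n).Walk x y, q.length ≤ n - 1 := by
  match n with
  | 0 => exact x.elim0
  | m + 1 =>
    obtain ⟨w⟩ := (pathGraph_connected m) x y
    exact ⟨w.toPath, by have := (w.toPath.2).length_lt; simp at this; omega⟩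

theorem grid_adj_coord {k : ℕ} {d : Fin k → ℕ} {a b : ∀ i, Fin (d i)}
    (h : (gridGraph d).Adj a b) (i : Fin k) :
    (b i : ℕ) ≤ a i + 1 ∧ (a i : ℕ) ≤ b i + 1 := by
  obtain ⟨j, hadj, heq⟩ := h
  by_cases hij : i = j
  · subst hij; rw [pathGraph_adj] at hadj; omega
  · rw [heq i hij]; omega

/-- Each coordinate moves by at most 1 per step, so walks are long. -/
theorem grid_walk_coord {k : ℕ} {d : Fin k → ℕ} {u v : ∀ i, Fin (d i)}
    (p : (gridGraph d).Walk u v) (i : Fin k) :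
    (u i : ℕ) ≤ v i + p.length ∧ (v i : ℕ) ≤ u i + p.length := by
  induction p with
  | nil => simp
  | cons h p ih =>
    have := grid_adj_coord h i
    simp only [Walk.length_cons]
    omega

/-- Updating one coordinate is a graph homomorphism from the path graph. -/
def updHom {k : ℕ} (d : Fin k → ℕ) (a : ∀ i, Fin (d i)) (i : Fin k) :
    pathGraph (d i) →g gridGraph d where
  toFun x := Function.update a i x
  map_rel' := by
    intro x y h
    exact ⟨i, by simpa using h, fun j hj => by simp [Function.update_of_ne hj]⟩

theorem updHom_injective {k : ℕ} (d : Fin k → ℕ) (a : ∀ i, Fin (d i)) (i : Fin k) :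
    Function.Injective (updHom d a i) := by
  intro x y h
  have h' : Function.update a i x = Function.update a i y := h
  simpa using congrFun h' i

/-- Walks exist in the grid graph with length at most sum of side lengths. -/
theorem grid_exists_walk_on {k : ℕ} (d : Fin k → ℕ) (s : Finset (Fin k)) :
    ∀ u v : ∀ i, Fin (d i), (∀ i ∉ s, u i = v i) →
      ∃ p : (gridGraph d).Walk u v, p.length ≤ ∑ i ∈ s, (d i - 1) := by
  classical
  induction s using Finset.induction_on with
  | empty =>
    intro u v huv
    have : u = v := funext fun i => huv i (by simp)
    subst this
    exact ⟨Walk.nil, by simp⟩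
  | @insert a s ha ih =>
    intro u v huv
    obtain ⟨q0, hq0⟩ := pg_exists_walk (d a) (u a) (v a)
    let p1 : (gridGraph d).Walk u (Function.update u a (v a)) :=
      (q0.map (updHom d u a)).copy (Function.update_eq_self a u) rfl
    obtain ⟨p2, hp2⟩ := ih (Function.update u a (v a)) v (by
      intro i hi
      by_cases hia : i = a
      · subst hia; simp
      · rw [Function.update_of_ne hia]
        exact huv i (by simp [hia, hi]))
    refine ⟨p1.append p2, ?_⟩
    rw [Walk.length_append, Finset.sum_insert ha]
    have : p1.length = q0.length := (Walk.length_copy _ _ _).trans (Walk.length_map (f := updHom d u a) (p := q0))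
    omega

theorem grid_dist_le {k : ℕ} (d : Fin k → ℕ) (u v : ∀ i, Fin (d i)) :
    (gridGraph d).dist u v ≤ ∑ i : Fin k, (d i - 1) := by
  obtain ⟨p, hp⟩ := grid_exists_walk_on d Finset.univ u v (by simp)
  exact (SimpleGraph.dist_le p).trans hp

theorem stmt_10 (k : ℕ) (d : Fin (k + 1) → ℕ) (hd : ∀ i, 1 ≤ d i)
    (h1 : (∑ i : Fin k, (d i.succ - 1)) * (∏ i : Fin k, d i.succ) ≤ d 0) :
    ipPartition (gridGraph d) = ∏ i : Fin k, d i.succ ∧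
      ipCover (gridGraph d) = ∏ i : Fin k, d i.succ := by
  classical
  set N := ∏ i : Fin k, d i.succ with hN
  set S := ∑ i : Fin k, (d i.succ - 1) with hS
  have hd0 : 1 ≤ d 0 := hd 0
  have hcardT : Fintype.card (∀ i : Fin k, Fin (d i.succ)) = N := by
    simp [hN, Fintype.card_pi]
  let e : Fin N ≃ (∀ i : Fin k, Fin (d i.succ)) := (Fintype.equivFinOfCardEq hcardT).symm
  let emb : (∀ i : Fin k, Fin (d i.succ)) → (∀ i, Fin (d i)) :=
    fun t => Fin.cons ⟨0, hd 0⟩ t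
  let fib : (∀ i : Fin k, Fin (d i.succ)) → Set (∀ i, Fin (d i)) :=
    fun t => {v | ∀ i : Fin k, v i.succ = t i}
  have hfib : ∀ t, IsIsoPathSet (gridGraph d) (fib t) := by
    intro t
    have hlt : d 0 - 1 < d 0 := by omega
    let u0 : ∀ i, Fin (d i) := Function.update (emb t) 0 ⟨0, Nat.lt_of_le_of_lt (Nat.zero_le _) hlt⟩
    let u1 : ∀ i, Fin (d i) := Function.update (emb t) 0 ⟨d 0 - 1, hlt⟩
    let q : (gridGraph d).Walk u0 u1 := (pgWalk (d 0) (d 0 - 1) hlt).map (updHom d (emb t) 0)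
    have hlen : q.length = d 0 - 1 := by
      exact (Walk.length_map (f := updHom d (emb t) 0) (p := pgWalk (d 0) (d 0 - 1) hlt)).trans (pgWalk_length _ _ _)
    have hu00 : (u0 0 : ℕ) = 0 := by simp [u0]
    have hu10 : (u1 0 : ℕ) = d 0 - 1 := by simp [u1]
    refine ⟨u0, u1, q, ?_, ?_, ?_⟩
    · exact Walk.map_isPath_of_injective (updHom_injective d (emb t) 0)
        (pgWalk_isPath _ _ _)
    · have hle : (gridGraph d).dist u0 u1 ≤ d 0 - 1 := hlen ▸ SimpleGraph.dist_le q
      have hge : d 0 - 1 ≤ (gridGraph d).dist u0 u1 := by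
        obtain ⟨w, hw⟩ := (Reachable.exists_walk_length_eq_dist ⟨q⟩ :)
        have hc := grid_walk_coord w 0
        rw [hw] at hc
        omega
      omega
    · ext x
      have hs : q.support = (pgWalk (d 0) (d 0 - 1) hlt).support.map (updHom d (emb t) 0) :=
        Walk.support_map (f := updHom d (emb t) 0) (p := pgWalk (d 0) (d 0 - 1) hlt)
      simp only [hs, List.mem_map, Set.mem_setOf_eq, fib]
      constructor
      · intro hx
        refine ⟨x 0, ?_, ?_⟩
        · rw [pgWalk_support]; omega
        · show Function.update (emb t) 0 (x 0) = x
          funext i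
          refine Fin.cases ?_ (fun j => ?_) i
          · simp
          · rw [Function.update_of_ne (Fin.succ_ne_zero j)]
            simp [emb, hx j]
      · rintro ⟨y, -, rfl⟩ i
        show Function.update (emb t) 0 y i.succ = t i
        rw [Function.update_of_ne (Fin.succ_ne_zero i)]
        simp [emb]
  -- the fibers form a partition
  have hmem : N ∈ {n | ∃ f : Fin n → Set (∀ i, Fin (d i)),
      (∀ i, IsIsoPathSet (gridGraph d) (f i)) ∧
      (⋃ i, f i) = Set.univ ∧ Pairwise (Function.onFun Disjoint f)} := by
    refine ⟨fun j => fib (e j), fun j => hfib (e j), ?_, ?_⟩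
    · ext v
      simp only [Set.mem_iUnion, Set.mem_univ, iff_true]
      refine ⟨e.symm (fun i => v i.succ), ?_⟩
      show ∀ i : Fin k, v i.succ = e (e.symm _) i
      simp
    · intro i j hij
      simp only [Function.onFun, Set.disjoint_left]
      intro v hvi hvj
      apply hij
      apply e.injective
      funext i'
      rw [← hvi i', ← hvj i']
  -- the counting lower bound, for covers
  have hlb : ∀ n ∈ {n | ∃ f : Fin n → Set (∀ i, Fin (d i)),
      (∀ i, IsIsoPathSet (gridGraph d) (f i)) ∧ (⋃ i, f i) = Set.univ}, N ≤ n := by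
    rintro n ⟨f, hiso, hcov⟩
    have hcard : ∀ i : Fin n, (f i).toFinset.card ≤ d 0 + S := by
      intro i
      obtain ⟨u, v, p, hp, hlen, hset⟩ := hiso i
      have h2 : (f i).toFinset = p.support.toFinset := by
        rw [hset]; ext x; simp
      rw [h2, List.toFinset_card_of_nodup hp.support_nodup, Walk.length_support, hlen]
      have h3 := grid_dist_le d u v
      rw [Fin.sum_univ_succ, ← hS] at h3
      omega
    have htotal : d 0 * N ≤ n * (d 0 + S) := by
      have h3 : (Set.univ : Set (∀ i, Fin (d i))).toFinset ⊆
          Finset.univ.biUnion fun i => (f i).toFinset := by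
        intro x _
        have hx : x ∈ ⋃ i, f i := hcov ▸ Set.mem_univ x
        obtain ⟨i, hi⟩ := Set.mem_iUnion.mp hx
        exact Finset.mem_biUnion.mpr ⟨i, Finset.mem_univ i, Set.mem_toFinset.mpr hi⟩
      have h4 : Fintype.card (∀ i, Fin (d i)) ≤ n * (d 0 + S) := by
        calc Fintype.card (∀ i, Fin (d i))
            = (Set.univ : Set (∀ i, Fin (d i))).toFinset.card := by simp
          _ ≤ (Finset.univ.biUnion fun i => (f i).toFinset).card := Finset.card_le_card h3
          _ ≤ ∑ i : Fin n, (f i).toFinset.card := Finset.card_biUnion_le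
          _ ≤ ∑ _i : Fin n, (d 0 + S) := Finset.sum_le_sum fun i _ => hcard i
          _ = n * (d 0 + S) := by simp [Nat.mul_comm]
      have h5 : Fintype.card (∀ i, Fin (d i)) = d 0 * N := by
        rw [Fintype.card_pi]
        simp only [Fintype.card_fin]
        rw [Fin.prod_univ_succ, ← hN]
      omega
    by_contra hn
    push_neg at hn
    have hN1 : 1 ≤ N := Finset.one_le_prod' fun i _ => hd i.succ
    obtain ⟨m, hm⟩ : ∃ m, N = m + 1 := ⟨N - 1, by omega⟩
    have hn' : n ≤ m := by omega
    have h6 : n * (d 0 + S) ≤ m * (d 0 + S) := Nat.mul_le_mul_right _ hn'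
    have h7 : d 0 * (m + 1) ≤ m * (d 0 + S) := by rw [← hm]; exact htotal.trans h6
    rw [Nat.mul_succ, Nat.mul_add, Nat.mul_comm m (d 0)] at h7
    have h8 : d 0 ≤ m * S := Nat.le_of_add_le_add_left h7
    have h9 : S * (m + 1) ≤ m * S := by rw [← hm]; exact h1.trans h8
    rw [Nat.mul_succ, Nat.mul_comm m S] at h9
    have h10 : S * m + S ≤ S * m + 0 := by omega
    have h11 : S = 0 := by omega
    rw [h11, Nat.mul_zero] at h8
    omega
  have hmem' : N ∈ {n | ∃ f : Fin n → Set (∀ i, Fin (d i)),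
      (∀ i, IsIsoPathSet (gridGraph d) (f i)) ∧ (⋃ i, f i) = Set.univ} := by
    obtain ⟨f, ha, hb, _⟩ := hmem
    exact ⟨f, ha, hb⟩
  constructor
  · apply le_antisymm (Nat.sInf_le hmem)
    apply le_csInf ⟨N, hmem⟩
    rintro n ⟨f, ha, hb, -⟩
    exact hlb n ⟨f, ha, hb⟩
  · exact le_antisymm (Nat.sInf_le hmem') (le_csInf ⟨N, hmem'⟩ hlb)
end

section
/- For the two-dimensional grid P_r □ P_s with r ≥ s(s−1), both the isometric path cover number and the isometric path partition number equal s. -/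
open SimpleGraph

/-- Walk in `pathGraph r` from `a` to `a+d`. -/
def segWalk (r : ℕ) : (a d : ℕ) → (h : a + d < r) →
    (pathGraph r).Walk ⟨a, Nat.lt_of_le_of_lt (Nat.le_add_right a d) h⟩ ⟨a + d, h⟩
  | _, 0, _ => Walk.nil
  | a, d + 1, h =>
    ((Walk.cons
        (show (pathGraph r).Adj ⟨a, by omega⟩
            ⟨a + 1, Nat.lt_of_le_of_lt (Nat.le_add_right (a+1) d) (by omega)⟩ by
          rw [pathGraph_adj]; left; rfl)
        (segWalk r (a + 1) d (by omega))).copy rfl (by congr 1; omega))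

@[simp] lemma segWalk_length (r a d : ℕ) (h : a + d < r) : (segWalk r a d h).length = d := by
  induction d generalizing a with
  | zero => rfl
  | succ d ih => simp [segWalk, ih]

lemma segWalk_support (r a d : ℕ) (h : a + d < r) (x : Fin r) :
    x ∈ (segWalk r a d h).support ↔ a ≤ x.val ∧ x.val ≤ a + d := by
  induction d generalizing a with
  | zero =>
    simp [segWalk, Fin.ext_iff]
    omega
  | succ d ih =>
    simp [segWalk, ih, Fin.ext_iff]
    omega

lemma segWalk_isPath (r a d : ℕ) (h : a + d < r) : (segWalk r a d h).IsPath := by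
  induction d generalizing a with
  | zero => exact Walk.IsPath.nil
  | succ d ih =>
    simp only [segWalk, Walk.isPath_copy, Walk.cons_isPath_iff]
    refine ⟨ih _ _, ?_⟩
    rw [segWalk_support]
    show ¬(a + 1 ≤ a ∧ a ≤ a + 1 + d)
    omega

lemma exists_walk_le (r : ℕ) (a b : Fin r) :
    ∃ w : (pathGraph r).Walk a b, w.length ≤ r - 1 := by
  rcases le_total a.val b.val with hab | hab
  · refine ⟨(segWalk r a.val (b.val - a.val) (by omega)).copy (Fin.ext rfl)
      (Fin.ext (by simp; omega)), ?_⟩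
    rw [Walk.length_copy, segWalk_length]
    omega
  · refine ⟨((segWalk r b.val (a.val - b.val) (by omega)).copy (Fin.ext rfl)
      (Fin.ext (by simp; omega))).reverse, ?_⟩
    rw [Walk.length_reverse, Walk.length_copy, segWalk_length]
    omega

lemma walk_coord {r s : ℕ} {u v : Fin r × Fin s}
    (p : (pathGraph r □ pathGraph s).Walk u v) :
    v.1.val ≤ u.1.val + p.length ∧ u.1.val ≤ v.1.val + p.length := by
  induction p with
  | nil => simp
  | cons h q ih =>
    rw [boxProd_adj] at h
    rw [Walk.length_cons]
    rcases h with ⟨h1, _⟩ | ⟨_, h1⟩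
    · rw [pathGraph_adj] at h1
      omega
    · replace h1 : _ = _ := congrArg Fin.val h1
      omega

lemma boxDist_le {r s : ℕ} (hr : 1 ≤ r) (hs : 1 ≤ s) (u v : Fin r × Fin s) :
    (pathGraph r □ pathGraph s).dist u v ≤ (r - 1) + (s - 1) := by
  obtain ⟨u1, u2⟩ := u
  obtain ⟨v1, v2⟩ := v
  obtain ⟨w1, hw1⟩ := exists_walk_le r u1 v1
  obtain ⟨w2, hw2⟩ := exists_walk_le s u2 v2
  calc (pathGraph r □ pathGraph s).dist (u1, u2) (v1, v2)
      ≤ ((w1.boxProdLeft (pathGraph s) u2).append (w2.boxProdRight (pathGraph r) v1)).length :=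
        dist_le _
    _ ≤ (r - 1) + (s - 1) := by
        rw [Walk.length_append, Walk.boxProdLeft, Walk.boxProdRight]
        erw [Walk.length_map, Walk.length_map]
        omega

/-- The walk along row `j` of the grid. -/
def rowWalk (r s : ℕ) (hr : 1 ≤ r) (j : Fin s) :
    (pathGraph r □ pathGraph s).Walk (⟨0, by omega⟩, j) (⟨r - 1, by omega⟩, j) :=
  ((segWalk r 0 (r - 1) (by omega)).copy (Fin.ext rfl) (Fin.ext (by simp))).boxProdLeft
    (pathGraph s) j

lemma rowWalk_length (r s : ℕ) (hr : 1 ≤ r) (j : Fin s) :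
    (rowWalk r s hr j).length = r - 1 := by
  rw [rowWalk, Walk.boxProdLeft]
  erw [Walk.length_map]
  rw [Walk.length_copy, segWalk_length]

lemma dist_row (r s : ℕ) (hr : 1 ≤ r) (j : Fin s) :
    (pathGraph r □ pathGraph s).dist (⟨0, by omega⟩, j) (⟨r - 1, by omega⟩, j) = r - 1 := by
  apply le_antisymm
  · calc _ ≤ (rowWalk r s hr j).length := dist_le _
      _ = r - 1 := rowWalk_length r s hr j
  · obtain ⟨p, hp⟩ := (Reachable.exists_walk_length_eq_dist ⟨rowWalk r s hr j⟩ :)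
    have := walk_coord p
    simp only [] at this
    omega

lemma rowWalk_isPath (r s : ℕ) (hr : 1 ≤ r) (j : Fin s) : (rowWalk r s hr j).IsPath := by
  apply Walk.map_isPath_of_injective
  · intro x y hxy
    simpa using congrArg Prod.fst hxy
  · rw [Walk.isPath_copy]
    exact segWalk_isPath _ _ _ _

lemma rowWalk_support (r s : ℕ) (hr : 1 ≤ r) (j : Fin s) (x : Fin r × Fin s) :
    x ∈ (rowWalk r s hr j).support ↔ x.2 = j := by
  rw [rowWalk, Walk.boxProdLeft]
  erw [Walk.support_map]
  simp only [List.mem_map, Walk.support_copy, segWalk_support]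
  constructor
  · rintro ⟨a, -, rfl⟩
    rfl
  · intro hx
    refine ⟨x.1, ⟨Nat.zero_le _, by omega⟩, ?_⟩
    rw [← hx]
    rfl



lemma lower_bound {r s n : ℕ} (hr : 1 ≤ r) (hs : 1 ≤ s) (h : s * (s - 1) ≤ r)
    (f : Fin n → Set (Fin r × Fin s))
    (hiso : ∀ i, IsIsoPathSet (pathGraph r □ pathGraph s) (f i))
    (hun : (⋃ i, f i) = Set.univ) : s ≤ n := by
  classical
  have hcard : ∀ i, (f i).toFinset.card ≤ r + s - 1 := by
    intro i
    obtain ⟨u, v, p, hp, hlen, hset⟩ := hiso i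
    have h1 : (f i).toFinset = p.support.toFinset := by
      ext x; simp [hset]
    rw [h1, List.toFinset_card_of_nodup hp.support_nodup, Walk.length_support, hlen]
    have := boxDist_le hr hs u v
    omega
  have hsub : (Finset.univ : Finset (Fin r × Fin s)) ⊆
      Finset.univ.biUnion (fun i => (f i).toFinset) := by
    intro x _
    have : x ∈ ⋃ i, f i := hun ▸ Set.mem_univ x
    obtain ⟨i, hi⟩ := Set.mem_iUnion.mp this
    exact Finset.mem_biUnion.mpr ⟨i, Finset.mem_univ i, Set.mem_toFinset.mpr hi⟩
  have hcount : r * s ≤ n * (r + s - 1) := by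
    calc r * s = (Finset.univ : Finset (Fin r × Fin s)).card := by
          simp [Fintype.card_prod]
      _ ≤ (Finset.univ.biUnion (fun i => (f i).toFinset)).card := Finset.card_le_card hsub
      _ ≤ ∑ i, (f i).toFinset.card := Finset.card_biUnion_le
      _ ≤ ∑ _i : Fin n, (r + s - 1) := Finset.sum_le_sum (fun i _ => hcard i)
      _ = n * (r + s - 1) := by simp [Finset.sum_const, mul_comm]
  obtain ⟨t, rfl⟩ := Nat.exists_eq_add_of_le hs
  by_contra hc
  push_neg at hc
  have hn : n ≤ t := by omega
  have h' : (1 + t) * t ≤ r := by simpa using h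
  have hcount' : r * (t + 1) ≤ n * (r + t) := by
    have : 1 + t - 1 = t := by omega
    calc r * (t + 1) = r * (1 + t) := by ring
      _ ≤ n * (r + (1 + t) - 1) := hcount
      _ = n * (r + t) := by congr 1; omega
  have h2 : n * (r + t) ≤ t * (r + t) := Nat.mul_le_mul_right _ hn
  nlinarith

theorem stmt_11 (r s : ℕ) (hr : 1 ≤ r) (hs : 1 ≤ s) (h : s * (s - 1) ≤ r) :
    ipCover (pathGraph r □ pathGraph s) = s ∧
      ipPartition (pathGraph r □ pathGraph s) = s := by
  classical
  set G := pathGraph r □ pathGraph s with hG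
  -- the rows form an isometric path partition
  set f : Fin s → Set (Fin r × Fin s) := fun j => {x | x.2 = j} with hf
  have hiso : ∀ j, IsIsoPathSet G (f j) := by
    intro j
    refine ⟨(⟨0, by omega⟩, j), (⟨r - 1, by omega⟩, j), rowWalk r s hr j,
      rowWalk_isPath r s hr j, ?_, ?_⟩
    · rw [rowWalk_length, dist_row r s hr j]
    · ext x
      simp [rowWalk_support, hf]
  have hun : (⋃ j, f j) = Set.univ := by
    ext x
    simp only [Set.mem_iUnion, Set.mem_univ, iff_true, hf, Set.mem_setOf_eq]
    exact ⟨x.2, rfl⟩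
  have hdisj : Pairwise (Function.onFun Disjoint f) := by
    intro i j hij
    simp only [Function.onFun, hf]
    rw [Set.disjoint_left]
    rintro x rfl
    exact fun hx => hij (hx ▸ rfl)
  have hmemC : s ∈ {n | ∃ f : Fin n → Set (Fin r × Fin s),
      (∀ i, IsIsoPathSet G (f i)) ∧ (⋃ i, f i) = Set.univ} := ⟨f, hiso, hun⟩
  have hmemP : s ∈ {n | ∃ f : Fin n → Set (Fin r × Fin s),
      (∀ i, IsIsoPathSet G (f i)) ∧ (⋃ i, f i) = Set.univ ∧
      Pairwise (Function.onFun Disjoint f)} := ⟨f, hiso, hun, hdisj⟩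
  constructor
  · refine le_antisymm (Nat.sInf_le hmemC) ?_
    obtain ⟨g, hg1, hg2⟩ := Nat.sInf_mem (⟨s, hmemC⟩ :
      Set.Nonempty {n | ∃ f : Fin n → Set (Fin r × Fin s),
        (∀ i, IsIsoPathSet G (f i)) ∧ (⋃ i, f i) = Set.univ})
    exact lower_bound hr hs h g hg1 hg2
  · refine le_antisymm (Nat.sInf_le hmemP) ?_
    obtain ⟨g, hg1, hg2, -⟩ := Nat.sInf_mem (⟨s, hmemP⟩ :
      Set.Nonempty {n | ∃ f : Fin n → Set (Fin r × Fin s),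
        (∀ i, IsIsoPathSet G (f i)) ∧ (⋃ i, f i) = Set.univ ∧
        Pairwise (Function.onFun Disjoint f)})
    exact lower_bound hr hs h g hg1 hg2
end

section
/- For the cylinder P_r □ C_s with r ≥ ⌊s/2⌋·s, both the isometric path cover number and the isometric path partition number equal s. -/
open SimpleGraph
open scoped Fin.NatCast Fin.CommRing

lemma pathGraph_walk (n : ℕ) : ∀ (k i : ℕ) (h : i + k < n),
    ∃ w : (pathGraph n).Walk ⟨i, by omega⟩ ⟨i + k, h⟩,
      w.length = k ∧ w.support.map Fin.val = List.range' i (k+1)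
  | 0, i, h => ⟨Walk.nil, by simp, by simp⟩
  | (k+1), i, h => by
    obtain ⟨w, hl, hsupp⟩ := pathGraph_walk n k (i+1) (by omega)
    have hadj : (pathGraph n).Adj ⟨i, by omega⟩ ⟨i+1, by omega⟩ := by
      rw [pathGraph_adj]; left; rfl
    refine ⟨(Walk.cons hadj w).copy rfl (Fin.mk_eq_mk.mpr (by omega)), ?_, ?_⟩
    · simp [hl]
    · simp only [Walk.support_copy, Walk.support_cons, List.map_cons, hsupp,
        List.range'_succ]

lemma cycleGraph_walk (m : ℕ) : ∀ (k : ℕ) (b : Fin (m+2)),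
    ∃ w : (cycleGraph (m+2)).Walk b (b + (k : Fin (m+2))), w.length = k
  | 0, b => ⟨Walk.nil.copy rfl (by simp), by simp⟩
  | (k+1), b => by
    obtain ⟨w, hl⟩ := cycleGraph_walk m k (b+1)
    have hadj : (cycleGraph (m+2)).Adj b (b+1) := by
      rw [cycleGraph_adj]; right; simp
    refine ⟨(Walk.cons hadj w).copy rfl (by push_cast; ring), by simp [hl]⟩

lemma cycleGraph_exists_walk (m : ℕ) (b d : Fin (m+2)) :
    ∃ w : (cycleGraph (m+2)).Walk b d, w.length ≤ (m+2)/2 := by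
  have hdb : b + (((d - b).val : ℕ) : Fin (m+2)) = d := by
    rw [Fin.cast_val_eq_self]; ring
  by_cases hle : (d - b).val ≤ (m+2)/2
  · obtain ⟨w, hw⟩ := cycleGraph_walk m (d - b).val b
    exact ⟨w.copy rfl hdb, by rw [Walk.length_copy, hw]; exact hle⟩
  · have hsum : (d - b).val + (b - d).val = m + 2 := by
      have h0 : ((d - b) + (b - d) : Fin (m+2)) = 0 := by ring
      have hv : ((d - b).val + (b - d).val) % (m+2) = 0 := by
        have := congrArg Fin.val h0
        rwa [Fin.add_def] at this
      have hks : (d - b).val < m+2 := (d - b).isLt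
      have hk's : (b - d).val < m+2 := (b - d).isLt
      have hkpos : 0 < (d - b).val := by omega
      obtain ⟨c, hc⟩ := Nat.dvd_of_mod_eq_zero hv
      rcases c with _ | _ | c
      · omega
      · omega
      · exfalso
        have h2 : (m+2)*(c+1+1) = (m+2)*c + (m+2)*2 := by ring
        omega
    obtain ⟨w, hw⟩ := cycleGraph_walk m (b - d).val d
    have hb : d + (((b - d).val : ℕ) : Fin (m+2)) = b := by
      rw [Fin.cast_val_eq_self]; ring
    refine ⟨((w.copy rfl hb).reverse), ?_⟩
    simp only [Walk.length_reverse, Walk.length_copy, hw]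
    omega

lemma pathGraph_exists_walk (n : ℕ) (a c : Fin n) :
    ∃ w : (pathGraph n).Walk a c, w.length ≤ n - 1 := by
  rcases le_total a.val c.val with hac | hac
  · obtain ⟨w, hl, -⟩ := pathGraph_walk n (c.val - a.val) a.val (by have := c.isLt; omega)
    refine ⟨w.copy (Fin.eta a a.isLt) (Fin.eq_of_val_eq (by simp; omega)), ?_⟩
    simp only [Walk.length_copy, hl]; have := c.isLt; omega
  · obtain ⟨w, hl, -⟩ := pathGraph_walk n (a.val - c.val) c.val (by have := a.isLt; omega)
    refine ⟨(w.copy (Fin.eta c c.isLt) (Fin.eq_of_val_eq (by simp; omega))).reverse, ?_⟩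
    simp only [Walk.length_reverse, Walk.length_copy, hl]; have := a.isLt; omega

lemma boxProd_fst_le_length {n : ℕ} {β : Type*} {H : SimpleGraph β} :
    ∀ {x y : Fin n × β} (w : (pathGraph n □ H).Walk x y),
      (y.1.val : ℤ) - x.1.val ≤ w.length := by
  intro x y w
  induction w with
  | nil => simp
  | @cons x z y h w ih =>
    rw [SimpleGraph.boxProd_adj] at h
    simp only [Walk.length_cons]
    rcases h with ⟨h1, h2⟩ | ⟨h1, h2⟩
    · rw [pathGraph_adj] at h1
      push_cast at ih ⊢
      omega
    · have h3 : x.1.val = z.1.val := by rw [h2]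
      push_cast at ih ⊢
      omega

lemma boxProd_dist_le (r m : ℕ) (u v : Fin r × Fin (m+2)) :
    (pathGraph r □ cycleGraph (m+2)).dist u v ≤ (r-1) + (m+2)/2 := by
  obtain ⟨w1, h1⟩ := pathGraph_exists_walk r u.1 v.1
  obtain ⟨w2, h2⟩ := cycleGraph_exists_walk m u.2 v.2
  have := SimpleGraph.dist_le
    ((w1.boxProdLeft (cycleGraph (m+2)) u.2).append (w2.boxProdRight (pathGraph r) v.1))
  rw [Walk.length_append] at this
  rw [show (w1.boxProdLeft (cycleGraph (m+2)) u.2).length = w1.length from Walk.length_map _ _,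
    show (w2.boxProdRight (pathGraph r) v.1).length = w2.length from Walk.length_map _ _] at this
  simp only [Prod.mk.eta] at this
  omega
lemma column_iso (r m : ℕ) (hr : 1 ≤ r) (j : Fin (m+2)) :
    IsIsoPathSet (pathGraph r □ cycleGraph (m+2)) {x : Fin r × Fin (m+2) | x.2 = j} := by
  obtain ⟨w0, hlen, hsupp⟩ := pathGraph_walk r (r-1) 0 (by omega)
  have hnodup : w0.support.Nodup := by
    apply List.Nodup.of_map Fin.val
    rw [hsupp]
    exact List.nodup_range' ..
  have hmemall : ∀ a : Fin r, a ∈ w0.support := by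
    intro a
    have h1 : a.val ∈ w0.support.map Fin.val := by
      rw [hsupp, List.mem_range'_1]
      have := a.isLt; omega
    obtain ⟨b, hb, hba⟩ := List.mem_map.mp h1
    exact Fin.eq_of_val_eq hba ▸ hb
  set p := w0.boxProdLeft (cycleGraph (m+2)) j with hp
  have hcoe : ⇑((pathGraph r).boxProdLeft (cycleGraph (m+2)) j).toHom
      = fun a => (a, j) := rfl
  have hplen : p.length = r - 1 := by
    rw [hp]; exact (Walk.length_map _ _).trans hlen
  refine ⟨_, _, p, ?_, ?_, ?_⟩
  · exact Walk.map_isPath_of_injective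
      (by rw [hcoe]; exact fun a b hab => congrArg Prod.fst hab)
      (Walk.IsPath.mk' hnodup)
  · have hdle := SimpleGraph.dist_le p
    obtain ⟨q, hq⟩ := p.reachable.exists_walk_length_eq_dist
    have hge := boxProd_fst_le_length q
    rw [hq] at hge
    simp only at hge
    push_cast at hge
    omega
  · ext ⟨a, b⟩
    simp only [Set.mem_setOf_eq]
    rw [show p.support = w0.support.map (fun a => (a, j)) from Walk.support_map _ _, List.mem_map]
    constructor
    · rintro rfl; exact ⟨a, hmemall a, rfl⟩
    · rintro ⟨a', -, heq⟩
      exact (Prod.mk.injEq _ _ _ _ ▸ heq).2.symm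
theorem stmt_12 (r s : ℕ) (hs : 3 ≤ s) (h : s / 2 * s ≤ r) :
    ipCover (pathGraph r □ cycleGraph s) = s ∧
      ipPartition (pathGraph r □ cycleGraph s) = s := by
  obtain ⟨m, rfl⟩ : ∃ m, s = m + 2 := ⟨s - 2, by omega⟩
  have hq1 : 1 ≤ (m+2)/2 := by omega
  have hr : 1 ≤ r := by
    have := Nat.mul_le_mul_right (m+2) hq1
    omega
  -- the column cover/partition
  have hmem : ∃ f : Fin (m+2) → Set (Fin r × Fin (m+2)),
      (∀ i, IsIsoPathSet (pathGraph r □ cycleGraph (m+2)) (f i)) ∧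
      (⋃ i, f i) = Set.univ ∧ Pairwise (Function.onFun Disjoint f) := by
    refine ⟨fun j => {x | x.2 = j}, fun j => column_iso r m hr j, ?_, ?_⟩
    · ext x
      simp only [Set.mem_iUnion, Set.mem_setOf_eq, Set.mem_univ, iff_true]
      exact ⟨x.2, rfl⟩
    · intro i j hij
      simp only [Function.onFun]
      rw [Set.disjoint_left]
      rintro x h1 h2
      exact hij (h1.symm.trans h2)
  -- counting lower bound
  have count : ∀ (n : ℕ) (f : Fin n → Set (Fin r × Fin (m+2))),
      (∀ i, IsIsoPathSet (pathGraph r □ cycleGraph (m+2)) (f i)) →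
      (⋃ i, f i) = Set.univ → m + 2 ≤ n := by
    intro n f hiso hcov
    by_contra hlt
    push_neg at hlt
    have hcard : ∀ i, ((f i).toFinite.toFinset).card ≤ r + (m+2)/2 := by
      intro i
      obtain ⟨u, v, p, hp, hlen, hset⟩ := hiso i
      have h2 := boxProd_dist_le r m u v
      have heq : (f i).toFinite.toFinset = p.support.toFinset := by
        ext x
        simp [hset, Set.Finite.mem_toFinset]
      have h1 : ((f i).toFinite.toFinset).card ≤ p.support.length := by
        rw [heq]; exact List.toFinset_card_le _
      rw [Walk.length_support] at h1
      omega
    have hsub : (Finset.univ : Finset (Fin r × Fin (m+2))) ⊆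
        Finset.univ.biUnion (fun i => (f i).toFinite.toFinset) := by
      intro x _
      have hx : x ∈ ⋃ i, f i := hcov ▸ Set.mem_univ x
      obtain ⟨i, hi⟩ := Set.mem_iUnion.mp hx
      exact Finset.mem_biUnion.mpr ⟨i, Finset.mem_univ i, (f i).toFinite.mem_toFinset.mpr hi⟩
    have htot : r * (m+2) ≤ n * (r + (m+2)/2) := by
      calc r * (m+2) = (Finset.univ : Finset (Fin r × Fin (m+2))).card := by
            simp [Finset.card_univ]
        _ ≤ (Finset.univ.biUnion (fun i => (f i).toFinite.toFinset)).card :=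
            Finset.card_le_card hsub
        _ ≤ ∑ i, ((f i).toFinite.toFinset).card := Finset.card_biUnion_le
        _ ≤ n * (r + (m+2)/2) := by
            have := Finset.sum_le_card_nsmul Finset.univ _ (r + (m+2)/2)
              (fun i _ => hcard i)
            simpa [smul_eq_mul] using this
    have hn : n ≤ m + 1 := by omega
    nlinarith [Nat.mul_le_mul_right (r + (m+2)/2) hn, h, hq1, htot]
  constructor
  · apply le_antisymm
    · exact Nat.sInf_le ⟨hmem.choose, hmem.choose_spec.1, hmem.choose_spec.2.1⟩
    · have hne : {n | ∃ f : Fin n → Set (Fin r × Fin (m+2)),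
          (∀ i, IsIsoPathSet (pathGraph r □ cycleGraph (m+2)) (f i)) ∧
          (⋃ i, f i) = Set.univ}.Nonempty :=
        ⟨m+2, hmem.choose, hmem.choose_spec.1, hmem.choose_spec.2.1⟩
      obtain ⟨f, hiso, hcov⟩ := Nat.sInf_mem hne
      exact count _ f hiso hcov
  · apply le_antisymm
    · exact Nat.sInf_le ⟨hmem.choose, hmem.choose_spec⟩
    · have hne : {n | ∃ f : Fin n → Set (Fin r × Fin (m+2)),
          (∀ i, IsIsoPathSet (pathGraph r □ cycleGraph (m+2)) (f i)) ∧
          (⋃ i, f i) = Set.univ ∧ Pairwise (Function.onFun Disjoint f)}.Nonempty :=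
        ⟨m+2, hmem.choose, hmem.choose_spec⟩
      obtain ⟨f, hiso, hcov, -⟩ := Nat.sInf_mem hne
      exact count _ f hiso hcov
end

section
/- For the (r × r)-dimensional torus C_r □ C_r with r even, both the isometric path cover number and the isometric path partition number equal r. -/
open SimpleGraph

namespace IPX

open Fin.NatCast Fin.CommRing

lemma mod2 (r e : ℕ) (hr : 0 < r) (h : e < 2*r) : e % r = if e < r then e else e - r := by
  split_ifs with h1
  · exact Nat.mod_eq_of_lt h1
  · rw [Nat.mod_eq_sub_mod (by omega)]
    exact Nat.mod_eq_of_lt (by omega)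

lemma sub_val {r : ℕ} (a b : Fin r) :
    (a - b).val = if b.val ≤ a.val then a.val - b.val else a.val + r - b.val := by
  have hb := b.isLt
  have ha := a.isLt
  rw [Fin.sub_def]
  show (r - b.val + a.val) % r = _
  rw [mod2 r _ (by omega) (by omega)]
  split_ifs <;> omega

/-- cyclic distance -/
def cd {r : ℕ} (a b : Fin r) : ℕ := min (a - b).val (b - a).val

lemma cd_lt {r : ℕ} (hr : 0 < r) (a b : Fin r) : cd a b ≤ r / 2 := by
  have := a.isLt
  have := b.isLt
  simp only [cd, sub_val]
  split_ifs <;> omega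

lemma cd_adj {r : ℕ} {a c : Fin r} (b : Fin r) (h : (cycleGraph r).Adj a c) :
    cd a b ≤ cd c b + 1 := by
  rw [cycleGraph_adj'] at h
  have := a.isLt
  have := b.isLt
  have := c.isLt
  simp only [cd, sub_val] at h ⊢
  split_ifs at h ⊢ <;> omega

lemma cd_le_length {r : ℕ} {a b : Fin r} (p : (cycleGraph r).Walk a b) : cd a b ≤ p.length := by
  induction p with
  | nil => simp [cd, sub_val]
  | cons h p ih =>
    rw [Walk.length_cons]
    exact le_trans (cd_adj _ h) (by omega)

lemma cyc_connected {r : ℕ} (hr : 0 < r) : (cycleGraph r).Connected := by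
  obtain ⟨s, rfl⟩ : ∃ s, r = s + 1 := ⟨r - 1, by omega⟩
  exact cycleGraph_connected

lemma adj_cyc {r : ℕ} [NeZero r] (hr : 1 < r) (A : ℕ) :
    (cycleGraph r).Adj (A : Fin r) ((A + 1 : ℕ) : Fin r) := by
  rw [cycleGraph_adj']
  right
  push_cast
  rw [show (A : Fin r) + 1 - A = 1 by ring]
  rw [Fin.val_one']
  exact Nat.mod_eq_of_lt hr

lemma dist_add_le {r : ℕ} [NeZero r] (hr : 1 < r) (A k : ℕ) :
    (cycleGraph r).dist (A : Fin r) ((A + k : ℕ) : Fin r) ≤ k := by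
  induction k with
  | zero => simp
  | succ k ih =>
    have h3 := (cyc_connected (r := r) (by omega)).dist_triangle
      (u := (A : Fin r)) (v := ((A + k : ℕ) : Fin r)) (w := ((A + k + 1 : ℕ) : Fin r))
    have hadj := adj_cyc hr (A + k)
    have : (cycleGraph r).dist ((A + k : ℕ) : Fin r) ((A + k + 1 : ℕ) : Fin r) ≤ 1 :=
      dist_le (Walk.cons hadj Walk.nil)
    calc (cycleGraph r).dist (A : Fin r) ((A + (k+1) : ℕ) : Fin r)
        = (cycleGraph r).dist (A : Fin r) ((A + k + 1 : ℕ) : Fin r) := by ring_nf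
      _ ≤ _ + _ := h3
      _ ≤ k + 1 := by omega

lemma dist_le_cd {r : ℕ} (hr : 1 < r) (a b : Fin r) : (cycleGraph r).dist a b ≤ cd a b := by
  haveI : NeZero r := ⟨by omega⟩
  have h1 : (cycleGraph r).dist a b ≤ (b - a).val := by
    have := dist_add_le hr a.val (b - a).val
    rwa [show ((a.val + (b-a).val : ℕ) : Fin r) = b by
      push_cast; ring,
      Fin.cast_val_eq_self] at this
  have h2 : (cycleGraph r).dist b a ≤ (a - b).val := by
    have := dist_add_le hr b.val (a - b).val
    rwa [show ((b.val + (a-b).val : ℕ) : Fin r) = a by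
      push_cast; ring,
      Fin.cast_val_eq_self] at this
  rw [SimpleGraph.dist_comm] at h2
  simp only [cd]
  omega

lemma cyc_dist_eq {r : ℕ} (hr : 1 < r) (a b : Fin r) : (cycleGraph r).dist a b = cd a b := by
  refine le_antisymm (dist_le_cd hr a b) ?_
  obtain ⟨p, hp⟩ := ((cyc_connected (by omega)).exists_walk_length_eq_dist a b)
  rw [← hp]
  exact cd_le_length p

abbrev Tor (r : ℕ) : SimpleGraph (Fin r × Fin r) := cycleGraph r □ cycleGraph r

lemma tor_le_length {r : ℕ} {x y : Fin r × Fin r} (p : (Tor r).Walk x y) :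
    cd x.1 y.1 + cd x.2 y.2 ≤ p.length := by
  induction p with
  | nil => simp [cd, sub_val]
  | @cons u v w h p ih =>
    rw [Walk.length_cons]
    rcases boxProd_adj.mp h with ⟨h1, h2⟩ | ⟨h1, h2⟩
    · have h3 := cd_adj w.1 h1
      rw [h2]
      omega
    · have h3 := cd_adj w.2 h1
      rw [h2]
      omega

lemma tor_connected {r : ℕ} (hr : 0 < r) : (Tor r).Connected :=
  (cyc_connected hr).boxProd (cyc_connected hr)

lemma tor_dist_eq {r : ℕ} (hr : 1 < r) (x y : Fin r × Fin r) :
    (Tor r).dist x y = cd x.1 y.1 + cd x.2 y.2 := by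
  refine le_antisymm ?_ ?_
  · obtain ⟨p, hp⟩ := (cyc_connected (r := r) (by omega)).exists_walk_length_eq_dist x.1 y.1
    obtain ⟨q, hq⟩ := (cyc_connected (r := r) (by omega)).exists_walk_length_eq_dist x.2 y.2
    refine le_trans (dist_le (((p.boxProdLeft (H := cycleGraph r) x.2).append
      (q.boxProdRight (G := cycleGraph r) y.1)).copy (by simp) (by simp))) ?_
    rw [Walk.length_copy, Walk.length_append]
    rw [show (p.boxProdLeft (H := cycleGraph r) x.2).length = p.length from Walk.length_map _ _,
      show (q.boxProdRight (G := cycleGraph r) y.1).length = q.length from Walk.length_map _ _]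
    rw [hp, hq, cyc_dist_eq hr, cyc_dist_eq hr]
  · obtain ⟨p, hp⟩ := (tor_connected (by omega)).exists_walk_length_eq_dist x y
    rw [← hp]
    exact tor_le_length p

lemma tor_dist_le {r : ℕ} (hr : 1 < r) (x y : Fin r × Fin r) :
    (Tor r).dist x y ≤ r := by
  rw [tor_dist_eq hr]
  have := cd_lt (r := r) (by omega) x.1 y.1
  have := cd_lt (r := r) (by omega) x.2 y.2
  omega

lemma adjx {r : ℕ} [NeZero r] (hr : 1 < r) (A B : ℕ) :
    (Tor r).Adj ((A : Fin r), (B : Fin r)) (((A + 1 : ℕ) : Fin r), (B : Fin r)) :=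
  boxProd_adj.mpr (Or.inl ⟨adj_cyc hr A, rfl⟩)

lemma adjy {r : ℕ} [NeZero r] (hr : 1 < r) (A B : ℕ) :
    (Tor r).Adj ((A : Fin r), (B : Fin r)) ((A : Fin r), ((B + 1 : ℕ) : Fin r)) :=
  boxProd_adj.mpr (Or.inr ⟨adj_cyc hr B, rfl⟩)

/-- staircase walk of `2c` steps -/
def stair {r : ℕ} [NeZero r] (hr : 1 < r) (A B : ℕ) :
    (c : ℕ) → (Tor r).Walk ((A : Fin r), (B : Fin r)) (((A + c : ℕ) : Fin r), ((B + c : ℕ) : Fin r))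
  | 0 => Walk.nil
  | (c+1) => (Walk.cons (adjx hr A B) (Walk.cons (adjy hr (A+1) B)
      (stair hr (A+1) (B+1) c))).copy rfl (by congr 2 <;> omega)

lemma stair_length {r : ℕ} [NeZero r] (hr : 1 < r) (A B c : ℕ) :
    (stair hr A B c).length = 2 * c := by
  induction c generalizing A B with
  | zero => rfl
  | succ c ih => simp [stair, ih]; omega

lemma stair_support {r : ℕ} [NeZero r] (hr : 1 < r) (A B c : ℕ) (p : Fin r × Fin r) :
    p ∈ (stair hr A B c).support ↔
      ((∃ y < c, ∃ e < 2, p = (((A + y + e : ℕ) : Fin r), ((B + y : ℕ) : Fin r))) ∨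
        p = (((A + c : ℕ) : Fin r), ((B + c : ℕ) : Fin r))) := by
  induction c generalizing A B with
  | zero => simp [stair]
  | succ c ih =>
    simp only [stair, Walk.support_copy, Walk.support_cons, List.mem_cons, ih]
    constructor
    · rintro (rfl | rfl | ⟨y, hy, e, he, rfl⟩ | rfl)
      · exact Or.inl ⟨0, by omega, 0, by omega, by norm_num⟩
      · exact Or.inl ⟨0, by omega, 1, by omega, by norm_num⟩
      · exact Or.inl ⟨y + 1, by omega, e, he, by rw [show A+1+y+e = A+(y+1)+e by omega,
          show B+1+y = B+(y+1) by omega]⟩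
      · exact Or.inr (by rw [show A+1+c = A+(c+1) by omega, show B+1+c = B+(c+1) by omega])
    · rintro (⟨y, hy, e, he, rfl⟩ | rfl)
      · rcases Nat.eq_zero_or_pos y with rfl | hy0
        · interval_cases e
          · exact Or.inl (by norm_num)
          · exact Or.inr (Or.inl (by norm_num))
        · exact Or.inr <| Or.inr <| Or.inl ⟨y - 1, by omega, e, he,
            by rw [show A+y+e = A+1+(y-1)+e by omega, show B+y = B+1+(y-1) by omega]⟩
      · exact Or.inr <| Or.inr <| Or.inr
          (by rw [show A+(c+1) = A+1+c by omega, show B+(c+1) = B+1+c by omega])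

/-- the vertex set of one staircase path -/
def TT (r A B mm : ℕ) [NeZero r] : Set (Fin r × Fin r) :=
  {p | ∃ y < mm, ∃ e < 2, p = (((A + y + e : ℕ) : Fin r), ((B + y : ℕ) : Fin r))}

def TF (r A B mm : ℕ) [NeZero r] : Finset (Fin r × Fin r) :=
  ((Finset.range mm) ×ˢ (Finset.range 2)).image
    (fun q => (((A + q.1 + q.2 : ℕ) : Fin r), ((B + q.1 : ℕ) : Fin r)))

lemma mem_TF {r A B mm : ℕ} [NeZero r] (p : Fin r × Fin r) :
    p ∈ TF r A B mm ↔ p ∈ TT r A B mm := by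
  simp only [TF, TT, Finset.mem_image, Finset.mem_product, Finset.mem_range, Set.mem_setOf_eq]
  constructor
  · rintro ⟨⟨y, e⟩, ⟨hy, he⟩, rfl⟩
    exact ⟨y, hy, e, he, rfl⟩
  · rintro ⟨y, hy, e, he, rfl⟩
    exact ⟨⟨y, e⟩, ⟨hy, he⟩, rfl⟩

lemma TF_card {r A B mm : ℕ} [NeZero r] (hr2 : 1 < r) (hmr : mm ≤ r)
    (hA : A + mm + 1 ≤ 2*r) (hB : B + mm ≤ 2*r) : (TF r A B mm).card = 2 * mm := by
  rw [TF, Finset.card_image_of_injOn, Finset.card_product, Finset.card_range, Finset.card_range]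
  · ring
  · rintro ⟨y, e⟩ hye ⟨y', e'⟩ hye' heq
    simp only [Finset.mem_coe, Finset.mem_product, Finset.mem_range] at hye hye'
    obtain ⟨hy, he⟩ := hye
    obtain ⟨hy', he'⟩ := hye'
    have hr : 0 < r := Nat.pos_of_ne_zero (NeZero.ne r)
    rw [Prod.ext_iff, Fin.ext_iff, Fin.ext_iff] at heq
    simp only [Fin.val_natCast] at heq
    obtain ⟨h1, h2⟩ := heq
    rw [mod2 r _ hr (by omega), mod2 r _ hr (by omega)] at h1 h2
    have : y = y' ∧ e = e' := by split_ifs at h1 h2 <;> omega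
    simp [this.1, this.2]

/-- the full staircase walk of length `2m - 1` -/
def fullW {r m : ℕ} [NeZero r] (hr : 1 < r) (hm : 1 ≤ m) (A B : ℕ) :
    (Tor r).Walk ((A : Fin r), (B : Fin r)) (((A + m : ℕ) : Fin r), ((B + (m-1) : ℕ) : Fin r)) :=
  ((stair hr A B (m-1)).append
    (Walk.cons (adjx hr (A+(m-1)) (B+(m-1))) Walk.nil)).copy rfl (by congr 2 <;> omega)

lemma fullW_length {r m : ℕ} [NeZero r] (hr : 1 < r) (hm : 1 ≤ m) (A B : ℕ) :
    (fullW hr hm A B).length = 2*m - 1 := by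
  simp [fullW, stair_length]
  omega

lemma fullW_support {r m : ℕ} [NeZero r] (hr : 1 < r) (hm : 1 ≤ m) (A B : ℕ)
    (p : Fin r × Fin r) : p ∈ (fullW hr hm A B).support ↔ p ∈ TT r A B m := by
  rw [fullW, Walk.support_copy, Walk.mem_support_append_iff]
  simp only [stair_support, Walk.support_cons, Walk.support_nil, List.tail_cons,
    List.mem_cons, List.not_mem_nil, or_false, TT, Set.mem_setOf_eq]
  constructor
  · rintro ((⟨y, hy, e, he, rfl⟩ | rfl) | (rfl | rfl))
    · exact ⟨y, by omega, e, he, rfl⟩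
    · exact ⟨m-1, by omega, 0, by omega, by norm_num⟩
    · exact ⟨m-1, by omega, 0, by omega, by norm_num⟩
    · exact ⟨m-1, by omega, 1, by omega, by rw [show A+(m-1)+1 = A + m by omega]⟩
  · rintro ⟨y, hy, e, he, rfl⟩
    rcases Nat.lt_or_ge y (m-1) with h | h
    · exact Or.inl (Or.inl ⟨y, h, e, he, rfl⟩)
    · have hym : y = m - 1 := by omega
      subst hym
      interval_cases e
      · exact Or.inl (Or.inr (by norm_num))
      · exact Or.inr (Or.inr (by rw [show A+(m-1)+1 = A + m by omega]))

/-- cd between casts -/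
lemma cd_cast {r : ℕ} [NeZero r] (A k : ℕ) (hk0 : 0 < k) (hk : k < r) :
    cd ((A : ℕ) : Fin r) ((A + k : ℕ) : Fin r) = min (r - k) k := by
  have hr : 0 < r := Nat.pos_of_ne_zero (NeZero.ne r)
  have h1 : ((A + k : ℕ) : Fin r) - ((A : ℕ) : Fin r) = ((k : ℕ) : Fin r) := by push_cast; ring
  have h2 : ((A : ℕ) : Fin r) - ((A + k : ℕ) : Fin r) = ((r - k : ℕ) : Fin r) := by
    rw [Nat.cast_sub hk.le]
    push_cast
    rw [Fin.natCast_self]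
    ring
  rw [cd, h1, h2, Fin.val_natCast, Fin.val_natCast, Nat.mod_eq_of_lt hk,
    Nat.mod_eq_of_lt (by omega)]

lemma TT_isIso {r m : ℕ} [NeZero r] (hm : 2 ≤ m) (hrm : r = m + m) (A B : ℕ)
    (hA : A + m + 1 ≤ 2*r) (hB : B + m ≤ 2*r) :
    (∃ (u v : Fin r × Fin r) (p : (Tor r).Walk u v), p.IsPath ∧ p.length = (Tor r).dist u v ∧
      TT r A B m = {x | x ∈ p.support}) ∧ (TT r A B m).ncard = r := by
  have hr : 1 < r := by omega
  have hm1 : 1 ≤ m := by omega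
  have hset : TT r A B m = {x | x ∈ (fullW (r := r) hr hm1 A B).support} := by
    ext p
    rw [Set.mem_setOf_eq, fullW_support]
  have hcardF : (TF r A B m).card = r := by rw [TF_card hr (by omega) hA hB]; omega
  have hTTcard : (TT r A B m).ncard = r := by
    have : TT r A B m = ↑(TF r A B m) := by ext p; rw [Finset.mem_coe, mem_TF]
    rw [this, Set.ncard_coe_finset, hcardF]
  refine ⟨⟨_, _, fullW hr hm1 A B, ?_, ?_, hset⟩, hTTcard⟩
  · apply Walk.IsPath.mk'
    have hlen : (fullW (r := r) hr hm1 A B).support.length = r := by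
      rw [Walk.length_support, fullW_length]; omega
    have htf : (fullW (r := r) hr hm1 A B).support.toFinset = TF r A B m := by
      ext p
      rw [List.mem_toFinset, mem_TF, ← fullW_support hr hm1]
    have hd : (fullW (r := r) hr hm1 A B).support.dedup.length = r := by
      rw [← List.card_toFinset, htf, hcardF]
    rw [← List.dedup_eq_self]
    exact (List.dedup_sublist _).eq_of_length (by omega)
  · rw [fullW_length, tor_dist_eq hr]
    simp only
    rw [cd_cast A m (by omega) (by omega), cd_cast B (m-1) (by omega) (by omega)]
    omega

def AA (m : ℕ) (i : ℕ) : ℕ := if i < m then 2*i else 2*i - m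
def BB (m : ℕ) (i : ℕ) : ℕ := if i < m then 0 else m

lemma mem_TT_iff {r A B mm : ℕ} [NeZero r] (p : Fin r × Fin r) :
    p ∈ TT r A B mm ↔ ∃ y < mm, ∃ e < 2, p.1.val = (A + y + e) % r ∧ p.2.val = (B + y) % r := by
  simp only [TT, Set.mem_setOf_eq, Prod.ext_iff, Fin.ext_iff, Fin.val_natCast]

lemma exists_unique_mem {r m : ℕ} [NeZero r] (hm : 2 ≤ m) (hrm : r = m + m)
    (p : Fin r × Fin r) : ∃! i : Fin r, p ∈ TT r (AA m i.val) (BB m i.val) m := by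
  have hr : 0 < r := by omega
  have hXr : p.1.val < r := p.1.isLt
  have hYr : p.2.val < r := p.2.isLt
  obtain ⟨d, hd1, hd2⟩ : ∃ d, d < r ∧
      (p.1.val + r - p.2.val = d ∨ p.1.val + r - p.2.val = d + r) := by
    refine ⟨(p.1.val + r - p.2.val) % r, Nat.mod_lt _ hr, ?_⟩
    rw [mod2 r _ hr (by omega)]
    split_ifs <;> omega
  obtain ⟨k, e, hke, he2⟩ : ∃ k e, d = 2*k + e ∧ e < 2 := ⟨d/2, d%2, by omega, by omega⟩
  have hkm : k < m := by omega
  by_cases hYm : p.2.val < m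
  · refine ⟨⟨k, by omega⟩, ?_, ?_⟩
    · show p ∈ TT r (AA m k) (BB m k) m
      rw [mem_TT_iff]
      refine ⟨p.2.val, hYm, e, he2, ?_, ?_⟩
      · simp only [AA, if_pos hkm]
        rw [mod2 r _ hr (by omega)]
        split_ifs <;> omega
      · simp only [BB, if_pos hkm]
        rw [mod2 r _ hr (by omega)]
        split_ifs <;> omega
    · rintro j hj
      rw [mem_TT_iff] at hj
      obtain ⟨y', hy', e', he', h1, h2⟩ := hj
      simp only [AA, BB] at h1 h2
      have hjr : j.val < r := j.isLt
      apply Fin.ext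
      show j.val = k
      by_cases hjm : j.val < m
      · rw [if_pos hjm] at h1
        rw [if_pos hjm] at h2
        rw [mod2 r _ hr (by omega)] at h1
        rw [mod2 r _ hr (by omega)] at h2
        split_ifs at h1 h2 <;> omega
      · rw [if_neg hjm] at h1
        rw [if_neg hjm] at h2
        rw [mod2 r _ hr (by omega)] at h1
        rw [mod2 r _ hr (by omega)] at h2
        split_ifs at h1 h2 <;> omega
  · refine ⟨⟨k + m, by omega⟩, ?_, ?_⟩
    · show p ∈ TT r (AA m (k + m)) (BB m (k + m)) m
      rw [mem_TT_iff]
      refine ⟨p.2.val - m, by omega, e, he2, ?_, ?_⟩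
      · simp only [AA, if_neg (by omega : ¬ (k + m < m))]
        rw [mod2 r _ hr (by omega)]
        split_ifs <;> omega
      · simp only [BB, if_neg (by omega : ¬ (k + m < m))]
        rw [mod2 r _ hr (by omega)]
        split_ifs <;> omega
    · rintro j hj
      rw [mem_TT_iff] at hj
      obtain ⟨y', hy', e', he', h1, h2⟩ := hj
      simp only [AA, BB] at h1 h2
      have hjr : j.val < r := j.isLt
      apply Fin.ext
      show j.val = k + m
      by_cases hjm : j.val < m
      · rw [if_pos hjm] at h1
        rw [if_pos hjm] at h2
        rw [mod2 r _ hr (by omega)] at h1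
        rw [mod2 r _ hr (by omega)] at h2
        split_ifs at h1 h2 <;> omega
      · rw [if_neg hjm] at h1
        rw [if_neg hjm] at h2
        rw [mod2 r _ hr (by omega)] at h1
        rw [mod2 r _ hr (by omega)] at h2
        split_ifs at h1 h2 <;> omega

lemma ncard_fin_iUnion {α : Type*} [Fintype α] :
    ∀ (n : ℕ) (f : Fin n → Set α), (⋃ i, f i).ncard ≤ ∑ i, (f i).ncard := by
  intro n
  induction n with
  | zero => intro f; simp
  | succ n ih =>
    intro f
    have : (⋃ i, f i) = f 0 ∪ ⋃ i : Fin n, f i.succ := by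
      ext x
      simp [Fin.exists_fin_succ]
    rw [this, Fin.sum_univ_succ]
    exact le_trans (Set.ncard_union_le _ _) (by have := ih (fun i => f i.succ); omega)
end IPX

theorem stmt_13 (r : ℕ) (hr : 3 ≤ r) (heven : Even r) :
    ipCover (cycleGraph r □ cycleGraph r) = r ∧
      ipPartition (cycleGraph r □ cycleGraph r) = r := by
  haveI : NeZero r := ⟨by omega⟩
  obtain ⟨m, hrm⟩ := heven
  have hm2 : 2 ≤ m := by omega
  have hr1 : 1 < r := by omega
  -- the partition family
  set f : Fin r → Set (Fin r × Fin r) :=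
    fun i => IPX.TT r (IPX.AA m i.val) (IPX.BB m i.val) m with hf
  have hbounds : ∀ i : Fin r, IPX.AA m i.val + m + 1 ≤ 2*r ∧ IPX.BB m i.val + m ≤ 2*r := by
    intro i
    have := i.isLt
    simp only [IPX.AA, IPX.BB]
    split_ifs <;> omega
  have hiso : ∀ i : Fin r, IsIsoPathSet (cycleGraph r □ cycleGraph r) (f i) := by
    intro i
    exact (IPX.TT_isIso hm2 hrm _ _ (hbounds i).1 (hbounds i).2).1
  have huniq : ∀ p : Fin r × Fin r, ∃! i : Fin r, p ∈ f i := fun p =>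
    IPX.exists_unique_mem hm2 hrm p
  have hcover : (⋃ i, f i) = Set.univ := by
    ext p
    simp only [Set.mem_iUnion, Set.mem_univ, iff_true]
    exact ⟨(huniq p).exists.choose, (huniq p).exists.choose_spec⟩
  have hdisj : Pairwise (Function.onFun Disjoint f) := by
    intro i j hne
    rw [Function.onFun, Set.disjoint_left]
    intro p hpi hpj
    exact hne ((huniq p).unique hpi hpj)
  -- lower bound
  have hlow : ∀ n, (∃ g : Fin n → Set (Fin r × Fin r),
      (∀ i, IsIsoPathSet (cycleGraph r □ cycleGraph r) (g i)) ∧ (⋃ i, g i) = Set.univ) →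
      r ≤ n := by
    rintro n ⟨g, hg, hgu⟩
    have hcard : ∀ i, (g i).ncard ≤ r + 1 := by
      intro i
      obtain ⟨u, v, p, hp, hplen, hps⟩ := hg i
      have h1 : g i = ↑p.support.toFinset := by
        rw [hps]; ext x; simp
      rw [h1, Set.ncard_coe_finset]
      calc p.support.toFinset.card ≤ p.support.length := List.toFinset_card_le _
        _ = p.length + 1 := Walk.length_support p
        _ ≤ r + 1 := by
            have h5 := IPX.tor_dist_le hr1 u v
            have h6 : (IPX.Tor r).dist u v = (cycleGraph r □ cycleGraph r).dist u v := rfl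
            omega
    have huniv : (Set.univ : Set (Fin r × Fin r)).ncard = r * r := by
      rw [Set.ncard_univ, Nat.card_eq_fintype_card, Fintype.card_prod, Fintype.card_fin]
    have hsum : (⋃ i, g i).ncard ≤ ∑ i : Fin n, (g i).ncard := IPX.ncard_fin_iUnion n g
    have hsum2 : ∑ i : Fin n, (g i).ncard ≤ n * (r + 1) := by
      calc ∑ i : Fin n, (g i).ncard ≤ ∑ _i : Fin n, (r + 1) := Finset.sum_le_sum fun i _ => hcard i
        _ = n * (r + 1) := by simp [Finset.sum_const, mul_comm]
    rw [hgu, huniv] at hsum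
    by_contra hc
    push_neg at hc
    have h4 : n * (r + 1) ≤ (r - 1) * (r + 1) := Nat.mul_le_mul_right _ (by omega)
    obtain ⟨t, rfl⟩ : ∃ t, r = t + 3 := ⟨r - 3, by omega⟩
    have : (t + 3 - 1) * (t + 3 + 1) < (t + 3) * (t + 3) := by
      simp only [show t + 3 - 1 = t + 2 from rfl]
      nlinarith
    omega
  have hmem_part : r ∈ {n | ∃ g : Fin n → Set (Fin r × Fin r),
      (∀ i, IsIsoPathSet (cycleGraph r □ cycleGraph r) (g i)) ∧ (⋃ i, g i) = Set.univ ∧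
        Pairwise (Function.onFun Disjoint g)} := ⟨f, hiso, hcover, hdisj⟩
  have hmem_cov : r ∈ {n | ∃ g : Fin n → Set (Fin r × Fin r),
      (∀ i, IsIsoPathSet (cycleGraph r □ cycleGraph r) (g i)) ∧ (⋃ i, g i) = Set.univ} :=
    ⟨f, hiso, hcover⟩
  constructor
  · refine le_antisymm (Nat.sInf_le hmem_cov) (le_csInf ⟨r, hmem_cov⟩ ?_)
    rintro n ⟨g, hg, hgu⟩
    exact hlow n ⟨g, hg, hgu⟩
  · refine le_antisymm (Nat.sInf_le hmem_part) (le_csInf ⟨r, hmem_part⟩ ?_)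
    rintro n ⟨g, hg, hgu, _⟩
    exact hlow n ⟨g, hg, hgu⟩
end

section
/- For the (r × r)-dimensional torus C_r □ C_r with r odd, the isometric path cover number and the isometric path partition number are each equal to r or r + 1. -/
open SimpleGraph

open Fin.NatCast Fin.CommRing

namespace Stair
variable {r : ℕ}

lemma cyc_adj_succ [NeZero r] (h2 : 2 ≤ r) (a : Fin r) : (cycleGraph r).Adj a (a + 1) := by
  rw [cycleGraph_adj']
  right
  have h : a + 1 - a = (1 : Fin r) := by ring
  rw [h, Fin.val_one', Nat.mod_eq_of_lt (by omega)]

lemma cyc_adj_cases [NeZero r] (h2 : 2 ≤ r) {x y : Fin r} (h : (cycleGraph r).Adj x y) :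
    y - x = 1 ∨ y - x = -1 := by
  rw [cycleGraph_adj'] at h
  have h1 : (1 : Fin r).val = 1 := by rw [Fin.val_one', Nat.mod_eq_of_lt (by omega)]
  rcases h with h | h
  · right
    have : x - y = 1 := Fin.ext (by rw [h, h1])
    rw [← this]; ring
  · left
    exact Fin.ext (by rw [h, h1])

/-- forward walk along the cycle -/
def walkF [NeZero r] (h2 : 2 ≤ r) : (c : ℕ) → (a : Fin r) → (cycleGraph r).Walk a (a + (c : Fin r))
  | 0, a => Walk.nil.copy rfl (by simp)
  | c + 1, a => ((Walk.cons (cyc_adj_succ h2 a) (walkF h2 c (a + 1))).copy rfl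
      (by push_cast; ring))

lemma walkF_length [NeZero r] (h2 : 2 ≤ r) (c : ℕ) (a : Fin r) :
    (walkF h2 c a).length = c := by
  induction c generalizing a with
  | zero => simp [walkF]
  | succ c ih => simp [walkF, ih]

lemma cyc_exists_walk [NeZero r] {m : ℕ} (hm : r = 2 * m + 1) (h2 : 2 ≤ r) (u v : Fin r) :
    ∃ w : (cycleGraph r).Walk u v, w.length ≤ m := by
  set c := (v - u).val with hc
  have hvc : v = u + (c : Fin r) := by
    rw [hc, Fin.cast_val_eq_self]; ring
  by_cases hcm : c ≤ m
  · exact ⟨(walkF h2 c u).copy rfl hvc.symm, by simp [walkF_length, hcm]⟩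
  · have hclt : c < r := (v - u).isLt
    have hvu : v + ((r - c : ℕ) : Fin r) = u := by
      have : ((r - c : ℕ) : Fin r) = (r : Fin r) - (c : Fin r) := by
        rw [Nat.cast_sub hclt.le]
      rw [this, Fin.natCast_self, hvc]
      ring
    refine ⟨((walkF h2 (r - c) v).copy rfl hvu).reverse, ?_⟩
    simp [walkF_length]
    omega

/-- staircase walk in the torus -/
def walkSE [NeZero r] (h2 : 2 ≤ r) :
    (n : ℕ) → (a b : Fin r) →
      (cycleGraph r □ cycleGraph r).Walk (a, b) (a + (n : Fin r), b + (n : Fin r))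
  | 0, a, b => Walk.nil.copy rfl (by simp)
  | n + 1, a, b =>
    (Walk.cons (boxProd_adj_left.mpr (cyc_adj_succ h2 a))
      (Walk.cons (boxProd_adj_right.mpr (cyc_adj_succ h2 b))
        (walkSE h2 n (a + 1) (b + 1)))).copy rfl
          (by push_cast; rw [Prod.ext_iff]; constructor <;> ring)

lemma walkSE_length [NeZero r] (h2 : 2 ≤ r) (n : ℕ) (a b : Fin r) :
    (walkSE h2 n a b).length = 2 * n := by
  induction n generalizing a b with
  | zero => simp [walkSE]
  | succ n ih => simp [walkSE, ih]; ring

lemma walkSE_support [NeZero r] (h2 : 2 ≤ r) (n : ℕ) (a b : Fin r) (x : Fin r × Fin r) :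
    x ∈ (walkSE h2 n a b).support ↔
      (∃ j : ℕ, j ≤ n ∧ x = (a + (j : Fin r), b + (j : Fin r))) ∨
      (∃ j : ℕ, j < n ∧ x = (a + (j : Fin r) + 1, b + (j : Fin r))) := by
  induction n generalizing a b with
  | zero =>
    simp only [walkSE, Walk.support_copy, Walk.support_nil, List.mem_singleton]
    constructor
    · rintro rfl; exact Or.inl ⟨0, le_refl _, by simp⟩
    · rintro (⟨j, hj, rfl⟩ | ⟨j, hj, rfl⟩)
      · interval_cases j; simp
      · omega
  | succ n ih =>
    simp only [walkSE, Walk.support_copy, Walk.support_cons, List.mem_cons, ih]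
    constructor
    · rintro (rfl | rfl | ⟨j, hj, rfl⟩ | ⟨j, hj, rfl⟩)
      · exact Or.inl ⟨0, by omega, by simp⟩
      · exact Or.inr ⟨0, by omega, by simp⟩
      · exact Or.inl ⟨j + 1, by omega, by push_cast; rw [Prod.ext_iff]; constructor <;> ring_nf⟩
      · exact Or.inr ⟨j + 1, by omega, by push_cast; rw [Prod.ext_iff]; constructor <;> ring_nf⟩
    · rintro (⟨j, hj, rfl⟩ | ⟨j, hj, rfl⟩)
      · match j with
        | 0 => left; simp
        | j + 1 =>
          right; right; left
          exact ⟨j, by omega, by push_cast; rw [Prod.ext_iff]; constructor <;> ring_nf⟩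
      · match j with
        | 0 => right; left; simp
        | j + 1 =>
          right; right; right
          exact ⟨j, by omega, by push_cast; rw [Prod.ext_iff]; constructor <;> ring_nf⟩

lemma potential [NeZero r] (h2 : 2 ≤ r) {u v : Fin r × Fin r}
    (p : (cycleGraph r □ cycleGraph r).Walk u v) :
    ∃ s t : ℤ, s.natAbs ≤ p.length ∧ t.natAbs ≤ p.length ∧
      ((s : Fin r) = (v.1 + v.2) - (u.1 + u.2)) ∧
      ((t : Fin r) = (v.1 - v.2) - (u.1 - u.2)) ∧
      Even (s - (p.length : ℤ)) ∧ Even (t - (p.length : ℤ)) := by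
  induction p with
  | nil => exact ⟨0, 0, by simp, by simp, by simp, by simp, by simp, by simp⟩
  | @cons u w v h p ih =>
    obtain ⟨s, t, hs, ht, hsv, htv, hse, hte⟩ := ih
    rw [boxProd_adj] at h
    have key : ∃ dφ dψ : ℤ, (dφ = 1 ∨ dφ = -1) ∧ (dψ = 1 ∨ dψ = -1) ∧
        ((dφ : Fin r) = (w.1 + w.2) - (u.1 + u.2)) ∧
        ((dψ : Fin r) = (w.1 - w.2) - (u.1 - u.2)) := by
      rcases h with ⟨h1, h2'⟩ | ⟨h1, h2'⟩
      · rcases cyc_adj_cases h2 h1 with hd | hd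
        · exact ⟨1, 1, Or.inl rfl, Or.inl rfl,
            by push_cast; rw [← h2']; linear_combination -hd,
            by push_cast; rw [← h2']; linear_combination -hd⟩
        · exact ⟨-1, -1, Or.inr rfl, Or.inr rfl,
            by push_cast; rw [← h2']; linear_combination -hd,
            by push_cast; rw [← h2']; linear_combination -hd⟩
      · rcases cyc_adj_cases h2 h1 with hd | hd
        · exact ⟨1, -1, Or.inl rfl, Or.inr rfl,
            by push_cast; rw [← h2']; linear_combination -hd,
            by push_cast; rw [← h2']; linear_combination hd⟩
        · exact ⟨-1, 1, Or.inr rfl, Or.inl rfl,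
            by push_cast; rw [← h2']; linear_combination -hd,
            by push_cast; rw [← h2']; linear_combination hd⟩
    obtain ⟨dφ, dψ, hdφ, hdψ, hφ, hψ⟩ := key
    refine ⟨s + dφ, t + dψ, ?_, ?_, ?_, ?_, ?_, ?_⟩
    · have := Int.natAbs_add_le s dφ
      rcases hdφ with rfl | rfl <;> simp at this ⊢ <;> omega
    · have := Int.natAbs_add_le t dψ
      rcases hdψ with rfl | rfl <;> simp at this ⊢ <;> omega
    · push_cast
      rw [hsv, hφ]; ring
    · push_cast
      rw [htv, hψ]; ring
    · simp only [Walk.length_cons]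
      push_cast
      rcases hse with ⟨c, hc⟩
      rcases hdφ with rfl | rfl
      · exact ⟨c, by omega⟩
      · exact ⟨c - 1, by omega⟩
    · simp only [Walk.length_cons]
      push_cast
      rcases hte with ⟨c, hc⟩
      rcases hdψ with rfl | rfl
      · exact ⟨c, by omega⟩
      · exact ⟨c - 1, by omega⟩

lemma int_cast_fin_zero [NeZero r] {s : ℤ} (h : (s : Fin r) = 0) (hb : s.natAbs < r) : s = 0 := by
  have hdvd : (r : ℤ) ∣ s := (CharP.intCast_eq_zero_iff (Fin r) r s).mp h
  rcases hdvd with ⟨c, rfl⟩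
  have hna : ((r : ℤ) * c).natAbs = r * c.natAbs := by
    rw [Int.natAbs_mul]; simp
  rw [hna] at hb
  have hc0 : c.natAbs = 0 := by
    rcases Nat.eq_zero_or_pos c.natAbs with h0 | h0
    · exact h0
    · nlinarith [Nat.one_le_iff_ne_zero.mpr (Nat.pos_iff_ne_zero.mp h0)]
  have : c = 0 := Int.natAbs_eq_zero.mp hc0
  simp [this]

lemma dist_lower [NeZero r] {m : ℕ} (hm : r = 2 * m + 1) (hm1 : 1 ≤ m)
    {u v : Fin r × Fin r}
    (hφ : (v.1 + v.2) - (u.1 + u.2) = -1) (hψ : v.1 - v.2 = u.1 - u.2)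
    (q : (cycleGraph r □ cycleGraph r).Walk u v) : 2 * m ≤ q.length := by
  by_contra hL
  push_neg at hL
  have h2 : 2 ≤ r := by omega
  obtain ⟨s, t, hs, ht, hsv, htv, hse, hte⟩ := potential h2 q
  have hLr : q.length ≤ r - 2 := by omega
  -- t = 0
  have ht0 : t = 0 := by
    apply int_cast_fin_zero (r := r)
    · rw [htv, hψ]; ring
    · omega
  -- s = -1
  have hs1 : s = -1 := by
    have h0 : ((s + 1 : ℤ) : Fin r) = 0 := by push_cast; rw [hsv, hφ]; ring
    have := int_cast_fin_zero h0 (by omega)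
    omega
  rcases hse with ⟨c, hc⟩
  rcases hte with ⟨d, hd⟩
  omega

lemma torus_dist_le [NeZero r] {m : ℕ} (hm : r = 2 * m + 1) (h2 : 2 ≤ r)
    (u v : Fin r × Fin r) : (cycleGraph r □ cycleGraph r).dist u v ≤ 2 * m := by
  obtain ⟨w1, hw1⟩ := cyc_exists_walk hm h2 u.1 v.1
  obtain ⟨w2, hw2⟩ := cyc_exists_walk hm h2 u.2 v.2
  have hw : ((w1.boxProdLeft (cycleGraph r) u.2).append
      (w2.boxProdRight (cycleGraph r) v.1)).length ≤ 2 * m := by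
    rw [Walk.length_append]
    have l1 : (w1.boxProdLeft (cycleGraph r) u.2).length = w1.length := by
      rw [Walk.boxProdLeft]; exact Walk.length_map _ _
    have l2 : (w2.boxProdRight (cycleGraph r) v.1).length = w2.length := by
      rw [Walk.boxProdRight]; exact Walk.length_map _ _
    omega
  calc (cycleGraph r □ cycleGraph r).dist u v
      ≤ _ := dist_le ((w1.boxProdLeft (cycleGraph r) u.2).append
        (w2.boxProdRight (cycleGraph r) v.1))
    _ ≤ 2 * m := hw

namespace Main

variable [NeZero r] {m : ℕ}

/-- the k-th staircase path vertex set -/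
def pathSet (h2 : 2 ≤ r) (m : ℕ) (k : Fin r) : Set (Fin r × Fin r) :=
  {x | x ∈ (walkSE h2 m k (-k)).support}

lemma two_inv (hm : r = 2 * m + 1) : (2 : Fin r) * ((m + 1 : ℕ) : Fin r) = 1 := by
  have hr0 : ((2 * m + 1 : ℕ) : Fin r) = 0 := by rw [← hm]; exact Fin.natCast_self r
  push_cast at hr0 ⊢; linear_combination hr0

lemma pathSet_iso (hm : r = 2 * m + 1) (hm1 : 1 ≤ m) (h2 : 2 ≤ r) (k : Fin r) :
    IsIsoPathSet (cycleGraph r □ cycleGraph r) (pathSet h2 m k) := by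
  set p := walkSE h2 m k (-k) with hp
  have hlen : p.length = 2 * m := walkSE_length h2 m k (-k)
  have key : 2 * ((m : ℕ) : Fin r) + 1 = 0 := by
    have hr0 : ((2 * m + 1 : ℕ) : Fin r) = 0 := by rw [← hm]; exact Fin.natCast_self r
    push_cast at hr0; linear_combination hr0
  have hdist : (cycleGraph r □ cycleGraph r).dist (k, -k) (k + (m : Fin r), -k + (m : Fin r))
      = 2 * m := by
    apply le_antisymm
    · exact hlen ▸ dist_le p
    · obtain ⟨q, hq⟩ := Reachable.exists_walk_length_eq_dist ⟨p⟩
      rw [← hq]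
      apply dist_lower hm hm1
      · show (k + (m : Fin r)) + (-k + (m : Fin r)) - (k + -k) = -1
        linear_combination key
      · show (k + (m : Fin r)) - (-k + (m : Fin r)) = k - -k
        ring
  exact ⟨(k, -k), (k + (m : Fin r), -k + (m : Fin r)), p,
    p.isPath_of_length_eq_dist (hlen.trans hdist.symm), hlen.trans hdist.symm, rfl⟩

lemma mem_pathSet_key (hm : r = 2 * m + 1) (h2 : 2 ≤ r) {k : Fin r} {x y : Fin r}
    (h : (x, y) ∈ pathSet h2 m k) :
    k = if (((m + 1 : ℕ) : Fin r) * (x + y)).val ≤ m then ((m + 1 : ℕ) : Fin r) * (x - y)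
        else ((m + 1 : ℕ) : Fin r) * (x - y - 1) := by
  have h2inv := two_inv hm
  push_cast at h2inv
  rw [pathSet, Set.mem_setOf_eq, walkSE_support] at h
  rcases h with ⟨j, hj, hx⟩ | ⟨j, hj, hx⟩
  · rw [Prod.mk.injEq] at hx
    obtain ⟨hx1, hx2⟩ := hx
    have hxy : x + y = 2 * (j : Fin r) := by rw [hx1, hx2]; ring
    have hj' : (((m + 1 : ℕ) : Fin r) * (x + y)) = (j : Fin r) := by
      rw [hxy]; push_cast; linear_combination ((j : Fin r)) * h2inv
    have hval : (((m + 1 : ℕ) : Fin r) * (x + y)).val = j := by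
      rw [hj', Fin.val_cast_of_lt (by omega)]
    rw [hval, if_pos hj]
    have hd : x - y = 2 * k := by rw [hx1, hx2]; ring
    rw [hd]; push_cast; linear_combination (-k) * h2inv
  · rw [Prod.mk.injEq] at hx
    obtain ⟨hx1, hx2⟩ := hx
    have hxy : x + y = 2 * (j : Fin r) + 1 := by rw [hx1, hx2]; ring
    have hj' : (((m + 1 : ℕ) : Fin r) * (x + y)) = ((j + (m + 1) : ℕ) : Fin r) := by
      push_cast
      rw [hxy]; linear_combination ((j : Fin r)) * h2inv
    have hval : (((m + 1 : ℕ) : Fin r) * (x + y)).val = j + (m + 1) := by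
      rw [hj', Fin.val_cast_of_lt (by omega)]
    rw [hval, if_neg (by omega)]
    have hd : x - y - 1 = 2 * k := by rw [hx1, hx2]; ring
    rw [hd]; push_cast; linear_combination (-k) * h2inv

lemma pathSet_cover (hm : r = 2 * m + 1) (h2 : 2 ≤ r) :
    (⋃ k : Fin r, pathSet h2 m k) = Set.univ := by
  have h2inv := two_inv hm
  push_cast at h2inv
  ext z
  obtain ⟨x, y⟩ := z
  simp only [Set.mem_iUnion, Set.mem_univ, iff_true]
  set J := (((m + 1 : ℕ) : Fin r) * (x + y)).val with hJdef
  have hJc : ((J : ℕ) : Fin r) = ((m + 1 : ℕ) : Fin r) * (x + y) := Fin.cast_val_eq_self _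
  have hJlt : J < r := Fin.is_lt _
  by_cases hJ : J ≤ m
  · refine ⟨((m + 1 : ℕ) : Fin r) * (x - y), ?_⟩
    rw [pathSet, Set.mem_setOf_eq, walkSE_support]
    left
    refine ⟨J, hJ, ?_⟩
    rw [Prod.ext_iff]
    constructor
    · show x = ((m + 1 : ℕ) : Fin r) * (x - y) + (J : Fin r)
      rw [hJc]; push_cast; linear_combination (-x) * h2inv
    · show y = -(((m + 1 : ℕ) : Fin r) * (x - y)) + (J : Fin r)
      rw [hJc]; push_cast; linear_combination (-y) * h2inv
  · refine ⟨((m + 1 : ℕ) : Fin r) * (x - y - 1), ?_⟩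
    rw [pathSet, Set.mem_setOf_eq, walkSE_support]
    right
    refine ⟨J - (m + 1), by omega, ?_⟩
    have hJ' : J = (J - (m + 1)) + (m + 1) := by omega
    rw [hJ'] at hJc
    push_cast at hJc
    have hjc : (((J - (m + 1) : ℕ)) : Fin r) = ((m + 1 : ℕ) : Fin r) * (x + y)
        - ((m + 1 : ℕ) : Fin r) := by
      push_cast
      linear_combination hJc
    rw [Prod.ext_iff]
    constructor
    · show x = ((m + 1 : ℕ) : Fin r) * (x - y - 1) + ((J - (m + 1) : ℕ) : Fin r) + 1
      rw [hjc]; push_cast; linear_combination (1 - x) * h2inv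
    · show y = -(((m + 1 : ℕ) : Fin r) * (x - y - 1)) + ((J - (m + 1) : ℕ) : Fin r)
      rw [hjc]; push_cast; linear_combination (-y) * h2inv

end Main
end Stair

theorem stmt_14 (r : ℕ) (hr : 3 ≤ r) (hodd : Odd r) :
    r ≤ ipCover (cycleGraph r □ cycleGraph r) ∧
      ipCover (cycleGraph r □ cycleGraph r) ≤ ipPartition (cycleGraph r □ cycleGraph r) ∧
      ipPartition (cycleGraph r □ cycleGraph r) ≤ r + 1 := by
  obtain ⟨m, hm⟩ := hodd
  rw [two_mul] at hm
  have hm' : r = 2 * m + 1 := by omega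
  have hm1 : 1 ≤ m := by omega
  haveI : NeZero r := ⟨by omega⟩
  have h2 : 2 ≤ r := by omega
  set G := cycleGraph r □ cycleGraph r with hG
  set partSet := {n | ∃ f : Fin n → Set (Fin r × Fin r), (∀ i, IsIsoPathSet G (f i)) ∧
      (⋃ i, f i) = Set.univ ∧ Pairwise (Function.onFun Disjoint f)} with hps
  set covSet := {n | ∃ f : Fin n → Set (Fin r × Fin r), (∀ i, IsIsoPathSet G (f i)) ∧
      (⋃ i, f i) = Set.univ} with hcs
  -- the explicit staircase partition
  have hpart : r ∈ partSet := by
    refine ⟨fun k => Stair.Main.pathSet h2 m k, fun k => Stair.Main.pathSet_iso hm' hm1 h2 k,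
      Stair.Main.pathSet_cover hm' h2, ?_⟩
    intro i j hij
    rw [Function.onFun, Set.disjoint_left]
    rintro ⟨x, y⟩ hxi hxj
    have h1 := Stair.Main.mem_pathSet_key hm' h2 hxi
    have h2' := Stair.Main.mem_pathSet_key hm' h2 hxj
    exact hij (h1.trans h2'.symm)
  have hpc : partSet ⊆ covSet := by
    rintro n ⟨f, hf1, hf2, _⟩
    exact ⟨f, hf1, hf2⟩
  have hcov : r ∈ covSet := hpc hpart
  -- lower bound via counting
  have hlb : ∀ n ∈ covSet, r ≤ n := by
    rintro n ⟨f, hiso, hcover⟩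
    have hcard : ∀ i, ∃ S : Finset (Fin r × Fin r), f i = ↑S ∧ S.card ≤ r := by
      intro i
      obtain ⟨u, v, p, _, hlen, hset⟩ := hiso i
      refine ⟨p.support.toFinset, by rw [hset]; ext z; simp, ?_⟩
      calc p.support.toFinset.card ≤ p.support.length := p.support.toFinset_card_le
        _ = p.length + 1 := p.length_support
        _ ≤ 2 * m + 1 := by
            rw [hlen]; exact Nat.add_le_add_right (Stair.torus_dist_le hm' h2 u v) 1
        _ = r := hm'.symm
    choose S hS hSc using hcard
    have hsub : (Finset.univ : Finset (Fin r × Fin r)) ⊆ Finset.univ.biUnion S := by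
      intro z _
      have hz : z ∈ ⋃ i, f i := by rw [hcover]; trivial
      obtain ⟨i, hi⟩ := Set.mem_iUnion.mp hz
      rw [hS i] at hi
      exact Finset.mem_biUnion.mpr ⟨i, Finset.mem_univ i, hi⟩
    have hcount : r * r ≤ n * r := by
      calc r * r = (Finset.univ : Finset (Fin r × Fin r)).card := by
            simp [Fintype.card_prod]
        _ ≤ (Finset.univ.biUnion S).card := Finset.card_le_card hsub
        _ ≤ ∑ i, (S i).card := Finset.card_biUnion_le
        _ ≤ Finset.univ.card • r := Finset.sum_le_card_nsmul _ _ r (fun i _ => hSc i)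
        _ = n * r := by simp [smul_eq_mul]
    exact Nat.le_of_mul_le_mul_right hcount (by omega)
  refine ⟨le_csInf ⟨r, hcov⟩ hlb, csInf_le_csInf (OrderBot.bddBelow _) ⟨r, hpart⟩ hpc, ?_⟩
  exact (csInf_le (OrderBot.bddBelow _) hpart).trans (Nat.le_succ r)
end

section
/- For the r-dimensional Benes network BN(r), both the isometric path cover number and the isometric path partition number equal 2^r. -/
open SimpleGraph

/-- The `r`-dimensional Benes network: vertices `⟨w, i⟩` with `w ∈ {0,1}^r` and
`0 ≤ i ≤ 2r`; `⟨w, i⟩` is adjacent to `⟨w', i+1⟩` iff `w = w'` or `w` and `w'` differ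
exactly in the bit at position `i` (when `i < r`), respectively `2r - 1 - i` (when `i ≥ r`). -/
def benes (r : ℕ) : SimpleGraph ((Fin r → Bool) × Fin (2 * r + 1)) :=
  SimpleGraph.fromRel (fun a b =>
    (a.2 : ℕ) + 1 = (b.2 : ℕ) ∧
      (a.1 = b.1 ∨ ∀ j : Fin r, b.1 j =
        if (j : ℕ) = (if (a.2 : ℕ) < r then (a.2 : ℕ) else 2 * r - 1 - (a.2 : ℕ))
        then !(a.1 j) else a.1 j))

namespace BenesAux

def bpos (r t : ℕ) : ℕ := if t < r then t else 2 * r - 1 - t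

variable {r : ℕ}

lemma benes_adj_of (a b : Fin r → Bool) (t : ℕ) (ht : t < 2 * r)
    (hab : ∀ j : Fin r, (j : ℕ) ≠ bpos r t → a j = b j) :
    (benes r).Adj (a, ⟨t, by omega⟩) (b, ⟨t + 1, by omega⟩) := by
  rw [benes, SimpleGraph.fromRel_adj]
  constructor
  · intro h
    have := congrArg (fun x => ((x.2 : Fin (2*r+1)) : ℕ)) h
    simp at this
  · left
    refine ⟨by simp, ?_⟩
    by_cases hba : a = b
    · exact Or.inl hba
    · right
      intro j
      simp only [Fin.val_mk] -- normalize (⟨t,_⟩ : Fin _).val to t? maybe already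
      by_cases hj : (j : ℕ) = bpos r t
      · have hbj : b j = !(a j) := by
          rcases Bool.eq_or_eq_not (b j) (a j) with h' | h'
          · exfalso; apply hba
            funext j'
            by_cases hj' : (j' : ℕ) = bpos r t
            · have : j' = j := Fin.ext (by omega)
              rw [this, h']
            · exact hab j' hj'
          · exact h'
        rw [hbj]
        simp only [bpos] at hj
        simp [hj]
      · rw [← hab j hj]
        simp only [bpos] at hj
        simp [hj]

lemma adj_lvl {x y : (Fin r → Bool) × Fin (2*r+1)} (h : (benes r).Adj x y) :
    (x.2 : ℕ) + 1 = (y.2 : ℕ) ∨ (y.2 : ℕ) + 1 = (x.2 : ℕ) := by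
  rw [benes, SimpleGraph.fromRel_adj] at h
  rcases h.2 with h' | h'
  · exact Or.inl h'.1
  · exact Or.inr h'.1

lemma lvl_le_length {x y : (Fin r → Bool) × Fin (2*r+1)} (p : (benes r).Walk x y) :
    (x.2 : ℕ) ≤ (y.2 : ℕ) + p.length ∧ (y.2 : ℕ) ≤ (x.2 : ℕ) + p.length := by
  induction p with
  | nil => simp
  | cons h q ih =>
    have := adj_lvl h
    simp only [Walk.length_cons]
    omega

lemma sweep_up (w' : Fin r → Bool) :
    ∀ (k t : ℕ) (a : Fin r → Bool) (hk : t + k ≤ 2 * r),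
    ∃ (b : Fin r → Bool) (p : (benes r).Walk (a, ⟨t, by omega⟩) (b, ⟨t + k, by omega⟩)),
      p.length = k ∧ (∀ j, b j = a j ∨ b j = w' j) ∧
      (∀ j : Fin r, (∃ s, t ≤ s ∧ s < t + k ∧ (j : ℕ) = bpos r s) → b j = w' j) := by
  intro k
  induction k with
  | zero =>
    intro t a h
    exact ⟨a, Walk.nil, rfl, fun j => Or.inl rfl, fun j ⟨s, h1, h2, _⟩ => by omega⟩
  | succ k ih =>
    intro t a h
    set a₁ : Fin r → Bool := fun j => if (j : ℕ) = bpos r t then w' j else a j with ha₁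
    have adj : (benes r).Adj (a, ⟨t, by omega⟩) (a₁, ⟨t + 1, by omega⟩) :=
      benes_adj_of a a₁ t (by omega) (fun j hj => by simp [ha₁, hj])
    obtain ⟨b, p, hl, hb, hcov⟩ := ih (t + 1) a₁ (by omega)
    have hcp : ((b, ⟨t + 1 + k, by omega⟩) : (Fin r → Bool) × Fin (2*r+1)) = (b, ⟨t + (k+1), by omega⟩) := by
      simp [Prod.ext_iff, Fin.ext_iff]; omega
    refine ⟨b, (Walk.cons adj p).copy rfl hcp, ?_, ?_, ?_⟩
    · simp [hl]
    · intro j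
      rcases hb j with h' | h'
      · by_cases hj : (j : ℕ) = bpos r t
        · right; rw [h']; simp [ha₁, hj]
        · left; rw [h']; simp [ha₁, hj]
      · exact Or.inr h'
    · rintro j ⟨s, hs1, hs2, hs3⟩
      by_cases hst : s = t
      · have h1 : a₁ j = w' j := by subst hst; simp [ha₁, hs3]
        rcases hb j with h' | h'
        · rw [h', h1]
        · exact h'
      · exact hcov j ⟨s, by omega, by omega, hs3⟩

lemma sweep_down (w' : Fin r → Bool) :
    ∀ (k t : ℕ) (a : Fin r → Bool) (hk : t + k ≤ 2 * r),
    ∃ (b : Fin r → Bool) (p : (benes r).Walk (a, ⟨t + k, by omega⟩) (b, ⟨t, by omega⟩)),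
      p.length = k ∧ (∀ j, b j = a j ∨ b j = w' j) ∧
      (∀ j : Fin r, (∃ s, t ≤ s ∧ s < t + k ∧ (j : ℕ) = bpos r s) → b j = w' j) := by
  intro k
  induction k with
  | zero =>
    intro t a h
    exact ⟨a, Walk.nil, rfl, fun j => Or.inl rfl, fun j ⟨s, h1, h2, _⟩ => by omega⟩
  | succ k ih =>
    intro t a h
    set a₁ : Fin r → Bool := fun j => if (j : ℕ) = bpos r (t + k) then w' j else a j with ha₁
    have adj : (benes r).Adj (a, ⟨t + (k + 1), by omega⟩) (a₁, ⟨t + k, by omega⟩) := by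
      have := (benes_adj_of a₁ a (t + k) (by omega) (fun j hj => by simp [ha₁, hj])).symm
      convert this using 2
      exact Fin.ext (Nat.add_assoc t k 1).symm
    obtain ⟨b, p, hl, hb, hcov⟩ := ih t a₁ (by omega)
    refine ⟨b, Walk.cons adj p, ?_, ?_, ?_⟩
    · simp [hl]
    · intro j
      rcases hb j with h' | h'
      · by_cases hj : (j : ℕ) = bpos r (t + k)
        · right; rw [h']; simp [ha₁, hj]
        · left; rw [h']; simp [ha₁, hj]
      · exact Or.inr h'
    · rintro j ⟨s, hs1, hs2, hs3⟩
      by_cases hst : s = t + k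
      · have h1 : a₁ j = w' j := by subst hst; simp [ha₁, hs3]
        rcases hb j with h' | h'
        · rw [h', h1]
        · exact h'
      · exact hcov j ⟨s, by omega, by omega, hs3⟩

lemma straight (w : Fin r → Bool) :
    ∀ (k t : ℕ) (hk : t + k ≤ 2 * r),
    ∃ p : (benes r).Walk (w, ⟨t, by omega⟩) (w, ⟨t + k, by omega⟩),
      p.length = k ∧ p.IsPath ∧
      ∀ x, x ∈ p.support ↔ (x.1 = w ∧ t ≤ (x.2 : ℕ) ∧ (x.2 : ℕ) ≤ t + k) := by
  intro k
  induction k with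
  | zero =>
    intro t hk
    refine ⟨Walk.nil, rfl, Walk.IsPath.nil, fun x => ?_⟩
    simp only [Walk.support_nil, List.mem_singleton, Prod.ext_iff, Fin.ext_iff]
    constructor
    · rintro ⟨h1, h2⟩; exact ⟨h1, by omega⟩
    · rintro ⟨h1, h2, h3⟩; exact ⟨h1, by omega⟩
  | succ k ih =>
    intro t hk
    obtain ⟨p, hl, hp, hs⟩ := ih (t + 1) (by omega)
    have adj : (benes r).Adj (w, ⟨t, by omega⟩) (w, ⟨t + 1, by omega⟩) :=
      benes_adj_of w w t (by omega) (fun _ _ => rfl)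
    have hcp : ((w, ⟨t + 1 + k, by omega⟩) : (Fin r → Bool) × Fin (2*r+1)) = (w, ⟨t + (k+1), by omega⟩) := by
      exact Prod.ext rfl (Fin.ext (by simp only [Fin.val_mk]; omega))
    refine ⟨(Walk.cons adj p).copy rfl hcp, by simp [hl], ?_, ?_⟩
    · rw [Walk.isPath_copy, Walk.cons_isPath_iff]
      refine ⟨hp, fun hmem => ?_⟩
      have := ((hs _).mp hmem).2.1
      simp only [Fin.val_mk] at this
      omega
    · intro x
      rw [Walk.support_copy, Walk.support_cons, List.mem_cons, hs x]
      constructor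
      · rintro (h2 | ⟨h1, h2, h3⟩)
        · subst h2
          refine ⟨rfl, ?_⟩
          simp only [Fin.val_mk]
          omega
        · exact ⟨h1, by omega⟩
      · rintro ⟨h1, h2, h3⟩
        by_cases hx : (x.2 : ℕ) = t
        · left
          exact Prod.ext h1 (Fin.ext hx)
        · right; exact ⟨h1, by omega⟩

def mirror (r : ℕ) : (Fin r → Bool) × Fin (2*r+1) → (Fin r → Bool) × Fin (2*r+1) :=
  fun x => (x.1, ⟨2*r - (x.2 : ℕ), by omega⟩)

lemma mirror_rel {a b : (Fin r → Bool) × Fin (2*r+1)}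
    (h : (a.2 : ℕ) + 1 = (b.2 : ℕ) ∧
      (a.1 = b.1 ∨ ∀ j : Fin r, b.1 j =
        if (j : ℕ) = (if (a.2 : ℕ) < r then (a.2 : ℕ) else 2 * r - 1 - (a.2 : ℕ))
        then !(a.1 j) else a.1 j)) :
    ((mirror r b).2 : ℕ) + 1 = ((mirror r a).2 : ℕ) ∧
      ((mirror r b).1 = (mirror r a).1 ∨ ∀ j : Fin r, (mirror r a).1 j =
        if (j : ℕ) = (if ((mirror r b).2 : ℕ) < r then ((mirror r b).2 : ℕ)
            else 2 * r - 1 - ((mirror r b).2 : ℕ))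
        then !((mirror r b).1 j) else (mirror r b).1 j) := by
  obtain ⟨hlv, hw⟩ := h
  have hb2 : (b.2 : ℕ) ≤ 2*r := by omega
  constructor
  · simp only [mirror]; omega
  · rcases hw with hw | hw
    · left; simp only [mirror]; exact hw.symm
    · right
      intro j
      have hP : (if ((mirror r b).2 : ℕ) < r then ((mirror r b).2 : ℕ)
            else 2 * r - 1 - ((mirror r b).2 : ℕ))
          = (if (a.2 : ℕ) < r then (a.2 : ℕ) else 2 * r - 1 - (a.2 : ℕ)) := by
        simp only [mirror, Fin.val_mk]
        show (if 2*r - (b.2:ℕ) < r then 2*r - (b.2:ℕ) else 2*r-1-(2*r - (b.2:ℕ))) = _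
        have : (b.2 : ℕ) = (a.2 : ℕ) + 1 := by omega
        split_ifs <;> omega
      rw [hP]
      simp only [mirror]
      rw [hw j]
      by_cases hj : (j : ℕ) = (if (a.2 : ℕ) < r then (a.2 : ℕ) else 2 * r - 1 - (a.2 : ℕ))
      · simp [hj]
      · simp [hj]

lemma mirror_adj {x y : (Fin r → Bool) × Fin (2*r+1)} (h : (benes r).Adj x y) :
    (benes r).Adj (mirror r x) (mirror r y) := by
  rw [benes, SimpleGraph.fromRel_adj] at h ⊢
  obtain ⟨hne, hrel⟩ := h
  constructor
  · intro hceq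
    apply hne
    have h1 := congrArg Prod.fst hceq
    have h2 := congrArg (fun z => ((Prod.snd z : Fin (2*r+1)) : ℕ)) hceq
    simp only [mirror] at h1 h2
    have : (x.2 : ℕ) = (y.2 : ℕ) := by omega
    exact Prod.ext h1 (Fin.ext this)
  · rcases hrel with h | h
    · exact Or.inr (mirror_rel h)
    · exact Or.inl (mirror_rel h)

def mirrorHom (r : ℕ) : benes r →g benes r := ⟨mirror r, mirror_adj⟩

lemma route_norm (w w' : Fin r → Bool) (i i' : ℕ) (hii : i ≤ i') (hsum : i + i' ≤ 2 * r) :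
    ∃ p : (benes r).Walk (w, ⟨i, by omega⟩) (w', ⟨i', by omega⟩), p.length ≤ 2 * r := by
  classical
  set S : Finset (Fin r) := Finset.univ.filter (fun j => w j ≠ w' j) with hS
  by_cases hSn : S.Nonempty
  · set jmin : ℕ := (S.min' hSn : ℕ) with hjmin
    set jmax : ℕ := (S.max' hSn : ℕ) with hjmax
    have hjmaxr : jmax < r := (S.max' hSn).isLt
    set d : ℕ := min i jmin with hd
    set hh : ℕ := max i' (jmax + 1) with hhh
    have hd_le : d ≤ i := by omega
    have hhh_le : hh ≤ 2 * r := by omega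
    -- down from i to d
    obtain ⟨b₁, p₁, hl₁, hb₁, _⟩ := sweep_down w' (i - d) d w (by omega)
    obtain ⟨b₂, p₂, hl₂, hb₂, hcov₂⟩ := sweep_up w' (hh - d) d b₁ (by omega)
    obtain ⟨b₃, p₃, hl₃, hb₃, _⟩ := sweep_down w' (hh - i') i' b₂ (by omega)
    have key : ∀ j, (w j = w' j → b₁ j = w' j) := by
      intro j hj
      rcases hb₁ j with h | h
      · rw [h, hj]
      · exact h
    have hb₃w : b₃ = w' := by
      funext j
      have h2 : b₂ j = w' j := by
        by_cases hj : w j = w' j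
        · rcases hb₂ j with h | h
          · rw [h, key j hj]
          · exact h
        · have hjS : j ∈ S := by simp [hS, hj]
          apply hcov₂ j
          refine ⟨(j : ℕ), ?_, ?_, ?_⟩
          · have := S.min'_le j hjS; omega
          · have := S.le_max' j hjS
            have : (j : ℕ) ≤ jmax := by simpa [hjmax] using this
            omega
          · simp [bpos, j.isLt]
      rcases hb₃ j with h | h
      · rw [h, h2]
      · exact h
    have e₁ : ((w, ⟨d + (i - d), by omega⟩) : (Fin r → Bool) × Fin (2*r+1)) = (w, ⟨i, by omega⟩) :=
      Prod.ext rfl (Fin.ext (by simp only [Fin.val_mk]; omega))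
    have e₂ : ((b₂, ⟨d + (hh - d), by omega⟩) : (Fin r → Bool) × Fin (2*r+1)) = (b₂, ⟨i' + (hh - i'), by omega⟩) :=
      Prod.ext rfl (Fin.ext (by simp only [Fin.val_mk]; omega))
    have e₃ : ((b₃, ⟨i', by omega⟩) : (Fin r → Bool) × Fin (2*r+1)) = (w', ⟨i', by omega⟩) :=
      Prod.ext hb₃w rfl
    refine ⟨(p₁.copy e₁ rfl).reverse.reverse.copy rfl rfl |>.append
      (((p₂.copy rfl e₂).append (p₃.copy rfl e₃))), ?_⟩
    simp only [Walk.length_append, Walk.length_copy, Walk.length_reverse, hl₁, hl₂, hl₃]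
    omega
  · have hww : w = w' := by
      funext j
      by_contra hj
      exact hSn ⟨j, by simp [hS, hj]⟩
    obtain ⟨b, p, hl, hb, _⟩ := sweep_up w' (i' - i) i w (by omega)
    have hbw : b = w' := by
      funext j
      rcases hb j with h | h
      · rw [h, hww]
      · exact h
    have e : ((b, ⟨i + (i' - i), by omega⟩) : (Fin r → Bool) × Fin (2*r+1)) = (w', ⟨i', by omega⟩) :=
      Prod.ext hbw (Fin.ext (by simp only [Fin.val_mk]; omega))
    exact ⟨p.copy rfl e, by simp [hl]; omega⟩

lemma route (w w' : Fin r → Bool) (i i' : ℕ) (hi : i ≤ 2 * r) (hi' : i' ≤ 2 * r) :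
    ∃ p : (benes r).Walk (w, ⟨i, by omega⟩) (w', ⟨i', by omega⟩), p.length ≤ 2 * r := by
  by_cases hsum : i + i' ≤ 2 * r
  · rcases le_or_gt i i' with h | h
    · exact route_norm w w' i i' h hsum
    · obtain ⟨p, hp⟩ := route_norm w' w i' i (le_of_lt h) (by omega)
      exact ⟨p.reverse, by simpa using hp⟩
  · have h1 : 2*r - i ≤ 2*r := by omega
    have h2 : 2*r - i' ≤ 2*r := by omega
    have hsum' : (2*r - i) + (2*r - i') ≤ 2*r := by omega
    have hrec : ∃ p : (benes r).Walk (w, ⟨2*r - i, by omega⟩) (w', ⟨2*r - i', by omega⟩),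
        p.length ≤ 2 * r := by
      rcases le_or_gt (2*r - i) (2*r - i') with h | h
      · exact route_norm w w' _ _ h hsum'
      · obtain ⟨p, hp⟩ := route_norm w' w _ _ (le_of_lt h) (by omega)
        exact ⟨p.reverse, by simpa using hp⟩
    obtain ⟨p, hp⟩ := hrec
    have e₁ : (mirrorHom r) (w, ⟨2*r - i, by omega⟩) = (w, ⟨i, by omega⟩) :=
      Prod.ext rfl (Fin.ext (show 2*r - (2*r - i) = i by omega))
    have e₂ : (mirrorHom r) (w', ⟨2*r - i', by omega⟩) = (w', ⟨i', by omega⟩) :=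
      Prod.ext rfl (Fin.ext (show 2*r - (2*r - i') = i' by omega))
    exact ⟨(p.map (mirrorHom r)).copy e₁ e₂, by simpa using hp⟩

lemma dist_le_two_r (u v : (Fin r → Bool) × Fin (2*r+1)) : (benes r).dist u v ≤ 2 * r := by
  obtain ⟨p, hp⟩ := route u.1 v.1 (u.2 : ℕ) (v.2 : ℕ) (by omega) (by omega)
  exact le_trans (SimpleGraph.dist_le p) hp

lemma straight_iso (w : Fin r → Bool) :
    IsIsoPathSet (benes r) {x : (Fin r → Bool) × Fin (2*r+1) | x.1 = w} := by
  have main : ∃ p' : (benes r).Walk (w, ⟨0, by omega⟩) (w, ⟨2 * r, by omega⟩),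
      p'.length = 2 * r ∧ p'.IsPath ∧ ∀ x, x ∈ p'.support ↔ x.1 = w := by
    obtain ⟨p, hl, hp, hs⟩ := straight w (2 * r) 0 (by omega)
    have hcp : ((w, ⟨0 + 2 * r, by omega⟩) : (Fin r → Bool) × Fin (2*r+1)) = (w, ⟨2 * r, by omega⟩) :=
      Prod.ext rfl (Fin.ext (by simp only [Fin.val_mk]; omega))
    refine ⟨p.copy rfl hcp, by rw [Walk.length_copy, hl], by rw [Walk.isPath_copy]; exact hp, ?_⟩
    intro x
    rw [Walk.support_copy, hs x]
    constructor
    · rintro ⟨h, -, -⟩; exact h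
    · intro h; exact ⟨h, by omega, by have := x.2.isLt; omega⟩
  obtain ⟨p', hl', hpath, hs'⟩ := main
  have hdist : (benes r).dist (w, (⟨0, by omega⟩ : Fin (2*r+1))) (w, ⟨2 * r, by omega⟩) = 2 * r := by
    refine le_antisymm (le_trans (SimpleGraph.dist_le p') (le_of_eq hl')) ?_
    have hreach : (benes r).Reachable (w, (⟨0, by omega⟩ : Fin (2*r+1))) (w, ⟨2 * r, by omega⟩) := ⟨p'⟩
    obtain ⟨q, hq⟩ := hreach.exists_walk_length_eq_dist
    have := (lvl_le_length q).2
    simp only [Fin.val_mk] at this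
    omega
  refine ⟨_, _, p', hpath, by rw [hl', hdist], ?_⟩
  ext x
  simp only [Set.mem_setOf_eq, hs' x]
end BenesAux

open BenesAux in
theorem stmt_16 (r : ℕ) (hr : 1 ≤ r) :
    ipCover (benes r) = 2 ^ r ∧ ipPartition (benes r) = 2 ^ r := by
  classical
  obtain ⟨e⟩ : Nonempty ((Fin r → Bool) ≃ Fin (2 ^ r)) :=
    ⟨Fintype.equivFinOfCardEq (by simp)⟩
  have hiso : ∀ k : Fin (2 ^ r),
      IsIsoPathSet (benes r) {x : (Fin r → Bool) × Fin (2*r+1) | x.1 = e.symm k} :=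
    fun k => straight_iso (e.symm k)
  have hunion : (⋃ k : Fin (2 ^ r),
      {x : (Fin r → Bool) × Fin (2*r+1) | x.1 = e.symm k}) = Set.univ := by
    ext x
    simp only [Set.mem_iUnion, Set.mem_univ, iff_true, Set.mem_setOf_eq]
    exact ⟨e x.1, by simp⟩
  have hpair : Pairwise (Function.onFun Disjoint
      (fun k : Fin (2 ^ r) => {x : (Fin r → Bool) × Fin (2*r+1) | x.1 = e.symm k})) := by
    intro k k' hkk'
    simp only [Function.onFun]
    rw [Set.disjoint_left]
    intro x hx hx'
    simp only [Set.mem_setOf_eq] at hx hx'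
    exact hkk' (e.symm.injective (hx ▸ hx'))
  have hlb : ∀ n, (∃ g : Fin n → Set ((Fin r → Bool) × Fin (2*r+1)),
      (∀ i, IsIsoPathSet (benes r) (g i)) ∧ (⋃ i, g i) = Set.univ) → 2 ^ r ≤ n := by
    rintro n ⟨g, hgiso, hguniv⟩
    simp only [IsIsoPathSet] at hgiso
    choose u v p hpath hlen hset using hgiso
    have hcard : ∀ i, ((p i).support.toFinset).card ≤ 2 * r + 1 := by
      intro i
      calc ((p i).support.toFinset).card ≤ (p i).support.length := (p i).support.toFinset_card_le
        _ = (p i).length + 1 := Walk.length_support _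
        _ ≤ 2 * r + 1 := by have h1 := dist_le_two_r (u i) (v i); have h2 := hlen i; omega
    have hsub : (Finset.univ : Finset ((Fin r → Bool) × Fin (2*r+1))) ⊆
        Finset.univ.biUnion (fun i => (p i).support.toFinset) := by
      intro x _
      have hx : x ∈ ⋃ i, g i := by rw [hguniv]; trivial
      obtain ⟨i, hi⟩ := Set.mem_iUnion.mp hx
      rw [hset i] at hi
      exact Finset.mem_biUnion.mpr ⟨i, Finset.mem_univ i, List.mem_toFinset.mpr hi⟩
    have h1 : Fintype.card ((Fin r → Bool) × Fin (2*r+1)) ≤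
        ∑ i, ((p i).support.toFinset).card := by
      calc Fintype.card ((Fin r → Bool) × Fin (2*r+1))
          = (Finset.univ : Finset ((Fin r → Bool) × Fin (2*r+1))).card := rfl
        _ ≤ (Finset.univ.biUnion (fun i => (p i).support.toFinset)).card :=
            Finset.card_le_card hsub
        _ ≤ ∑ i, ((p i).support.toFinset).card := Finset.card_biUnion_le
    have h2 : ∑ i, ((p i).support.toFinset).card ≤ n * (2 * r + 1) := by
      calc ∑ i, ((p i).support.toFinset).card ≤ ∑ _i : Fin n, (2 * r + 1) :=
            Finset.sum_le_sum (fun i _ => hcard i)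
        _ = n * (2 * r + 1) := by simp [Finset.sum_const, Finset.card_univ, smul_eq_mul]
    have hcV : Fintype.card ((Fin r → Bool) × Fin (2*r+1)) = 2 ^ r * (2 * r + 1) := by
      simp [Fintype.card_prod]
    rw [hcV] at h1
    have h3 : 2 ^ r * (2 * r + 1) ≤ n * (2 * r + 1) := le_trans h1 h2
    exact Nat.le_of_mul_le_mul_right h3 (by omega)
  have hmemC : 2 ^ r ∈ {n | ∃ f : Fin n → Set ((Fin r → Bool) × Fin (2*r+1)),
      (∀ i, IsIsoPathSet (benes r) (f i)) ∧ (⋃ i, f i) = Set.univ} :=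
    ⟨_, hiso, hunion⟩
  have hmemP : 2 ^ r ∈ {n | ∃ f : Fin n → Set ((Fin r → Bool) × Fin (2*r+1)),
      (∀ i, IsIsoPathSet (benes r) (f i)) ∧ (⋃ i, f i) = Set.univ ∧
      Pairwise (Function.onFun Disjoint f)} :=
    ⟨_, hiso, hunion, hpair⟩
  constructor
  · refine le_antisymm (Nat.sInf_le hmemC) ?_
    obtain ⟨g, h1, h2⟩ := Nat.sInf_mem (⟨2 ^ r, hmemC⟩ : Set.Nonempty _)
    exact hlb _ ⟨g, h1, h2⟩
  · refine le_antisymm (Nat.sInf_le hmemP) ?_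
    obtain ⟨g, h1, h2, h3⟩ := Nat.sInf_mem (⟨2 ^ r, hmemP⟩ : Set.Nonempty _)
    exact hlb _ ⟨g, h1, h2⟩
end
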